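/- arXiv:1205.3980 — 4 statements merged into one kernel-verified Lean document; each statement's English description precedes it below -/
import Mathlib

section
/- For a finite weighted graph G with edge weights w and vertex weights pi, the smallest nonzero eigenvalue of the combinatorial Laplacian satisfies lambda_1(G) >= h(G)^2 / (2 d_max), where d_max = max over vertices x of (1/pi(x)) * sum over neighbors y of w(x,y). -/
open Finset

/-- `lam1 w π` : the smallest nonzero eigenvalue of the combinatorial Laplacian of the
weighted graph with edge weights `w` and vertex weights `π`, given by the minimum
Rayleigh quotient over functions orthogonal to constants. The Dirichlet form
`(1/2)·∑_{x,y} w x y (f x - f y)²` counts each undirected edge once. -/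
noncomputable def lam1 {V : Type*} [Fintype V] (w : V → V → ℝ) (π : V → ℝ) : ℝ :=
  sInf {r : ℝ | ∃ f : V → ℝ, (∑ x, π x * f x) = 0 ∧ f ≠ 0 ∧
    r = ((1 / 2) * ∑ x, ∑ y, w x y * (f x - f y) ^ 2) / (∑ x, π x * f x ^ 2)}

/-- `cheeger w π` : the Cheeger constant, the minimum over sets `S` with
`π(S) ≤ π(V)/2` of (weight of edges leaving `S`) / `π(S)`. -/
noncomputable def cheeger {V : Type*} [Fintype V] [DecidableEq V]
    (w : V → V → ℝ) (π : V → ℝ) : ℝ :=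
  sInf {r : ℝ | ∃ S : Finset V, S.Nonempty ∧ (∑ x ∈ S, π x) ≤ (∑ x, π x) / 2 ∧
    r = (∑ x ∈ S, ∑ y ∈ Sᶜ, w x y) / (∑ x ∈ S, π x)}

section CheegerHelpers

set_option linter.unusedSectionVars false

variable {V : Type*} [Fintype V] [DecidableEq V] (w : V → V → ℝ) (π : V → ℝ)

private lemma key5 (a b : ℝ) :
    (max a 0 - max b 0) ^ 2 + (max (-a) 0 - max (-b) 0) ^ 2 ≤ (a - b) ^ 2 := by
  rcases le_total a 0 with ha | ha <;> rcases le_total b 0 with hb | hb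
  · rw [max_eq_right ha, max_eq_right hb, max_eq_left (neg_nonneg.mpr ha),
      max_eq_left (neg_nonneg.mpr hb)]
    nlinarith
  · rw [max_eq_right ha, max_eq_left hb, max_eq_left (neg_nonneg.mpr ha),
      max_eq_right (neg_nonpos.mpr hb)]
    nlinarith [mul_nonneg (neg_nonneg.mpr ha) hb]
  · rw [max_eq_left ha, max_eq_right hb, max_eq_right (neg_nonpos.mpr ha),
      max_eq_left (neg_nonneg.mpr hb)]
    nlinarith [mul_nonneg ha (neg_nonneg.mpr hb)]
  · rw [max_eq_left ha, max_eq_left hb, max_eq_right (neg_nonpos.mpr ha),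
      max_eq_right (neg_nonpos.mpr hb)]
    nlinarith

private lemma cheeger_nonneg (hw_nonneg : ∀ x y, 0 ≤ w x y) (hπ_pos : ∀ x, 0 < π x) :
    0 ≤ cheeger w π := by
  apply Real.sInf_nonneg
  rintro r ⟨S, hS, hS2, rfl⟩
  exact div_nonneg
    (Finset.sum_nonneg fun x _ => Finset.sum_nonneg fun y _ => hw_nonneg x y)
    (Finset.sum_nonneg fun x _ => (hπ_pos x).le)

private lemma cheeger_le_cut (hw_nonneg : ∀ x y, 0 ≤ w x y) (hπ_pos : ∀ x, 0 < π x)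
    (S : Finset V) (hS : S.Nonempty) (hhalf : (∑ x ∈ S, π x) ≤ (∑ x, π x) / 2) :
    cheeger w π * (∑ x ∈ S, π x) ≤ ∑ x ∈ S, ∑ y ∈ Sᶜ, w x y := by
  have hden : 0 < ∑ x ∈ S, π x := Finset.sum_pos (fun x _ => hπ_pos x) hS
  have hbdd : BddBelow {r : ℝ | ∃ S : Finset V, S.Nonempty ∧ (∑ x ∈ S, π x) ≤ (∑ x, π x) / 2 ∧
      r = (∑ x ∈ S, ∑ y ∈ Sᶜ, w x y) / (∑ x ∈ S, π x)} := by
    refine ⟨0, ?_⟩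
    rintro r ⟨S', hS', h2, rfl⟩
    exact div_nonneg
      (Finset.sum_nonneg fun x _ => Finset.sum_nonneg fun y _ => hw_nonneg x y)
      (Finset.sum_nonneg fun x _ => (hπ_pos x).le)
  have hle : cheeger w π ≤ (∑ x ∈ S, ∑ y ∈ Sᶜ, w x y) / (∑ x ∈ S, π x) :=
    csInf_le hbdd ⟨S, hS, hhalf, rfl⟩
  exact (le_div_iff₀ hden).mp hle

private lemma coarea (hw_symm : ∀ x y, w x y = w y x) (hw_nonneg : ∀ x y, 0 ≤ w x y)
    (hπ_pos : ∀ x, 0 < π x) :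
    ∀ (n : ℕ) (g : V → ℝ), ((univ : Finset V).filter fun x => g x ≠ 0).card ≤ n →
      (∀ x, 0 ≤ g x) →
      (∑ x ∈ univ.filter (fun x => g x ≠ 0), π x) ≤ (∑ x, π x) / 2 →
      cheeger w π * (∑ x, π x * g x) ≤ (1/2) * ∑ x, ∑ y, w x y * |g x - g y| := by
  intro n
  induction n with
  | zero =>
    intro g hcard hg _
    have hS : ((univ : Finset V).filter fun x => g x ≠ 0) = ∅ :=
      card_eq_zero.mp (Nat.le_zero.mp hcard)
    have hzero : ∀ x, g x = 0 := by
      intro x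
      by_contra hx
      have : x ∈ (univ : Finset V).filter fun x => g x ≠ 0 := mem_filter.mpr ⟨mem_univ x, hx⟩
      simp [hS] at this
    simp [hzero]
  | succ n ih =>
    intro g hcard hg hhalf
    by_cases hSe : ((univ : Finset V).filter fun x => g x ≠ 0) = ∅
    · have hzero : ∀ x, g x = 0 := by
        intro x
        by_contra hx
        have : x ∈ (univ : Finset V).filter fun x => g x ≠ 0 := mem_filter.mpr ⟨mem_univ x, hx⟩
        simp [hSe] at this
      simp [hzero]
    · set S := (univ : Finset V).filter (fun x => g x ≠ 0) with hSdef
      have hSne : S.Nonempty := nonempty_iff_ne_empty.mpr hSe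
      have hIne : (S.image g).Nonempty := hSne.image g
      set t := (S.image g).min' hIne with htdef
      obtain ⟨x₀, hx₀S, hx₀⟩ := mem_image.mp ((S.image g).min'_mem hIne)
      have hx₀ne : g x₀ ≠ 0 := (mem_filter.mp hx₀S).2
      have ht_pos : 0 < t := by
        rw [htdef, ← hx₀]
        exact lt_of_le_of_ne (hg x₀) (Ne.symm hx₀ne)
      have ht_le : ∀ x ∈ S, t ≤ g x := fun x hx => min'_le _ _ (mem_image_of_mem g hx)
      set g' := fun x => if x ∈ S then g x - t else 0 with hg'def
      set χ := fun x => if x ∈ S then (1:ℝ) else 0 with hχdef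
      have hgS0 : ∀ x, x ∉ S → g x = 0 := by
        intro x hx
        by_contra h
        exact hx (mem_filter.mpr ⟨mem_univ x, h⟩)
      have hg'0 : ∀ x, 0 ≤ g' x := by
        intro x
        simp only [hg'def]
        split
        · linarith [ht_le x ‹_›]
        · exact le_refl 0
      have habs : ∀ x y, |g x - g y| = |g' x - g' y| + t * |χ x - χ y| := by
        intro x y
        by_cases hx : x ∈ S <;> by_cases hy : y ∈ S
        · simp only [hg'def, hχdef, if_pos hx, if_pos hy, sub_self, abs_zero, mul_zero, add_zero]
          ring_nf
        · have h1 : g y = 0 := hgS0 y hy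
          have h2 : 0 ≤ g x - t := by linarith [ht_le x hx]
          simp only [hg'def, hχdef, if_pos hx, if_neg hy, h1, sub_zero, abs_one]
          rw [abs_of_nonneg (hg x), abs_of_nonneg h2]
          ring
        · have h1 : g x = 0 := hgS0 x hx
          have h2 : 0 ≤ g y - t := by linarith [ht_le y hy]
          simp only [hg'def, hχdef, if_neg hx, if_pos hy, h1, zero_sub, abs_neg, abs_one]
          rw [abs_of_nonneg (hg y), abs_of_nonneg h2]
          ring
        · simp [hg'def, hχdef, hx, hy, hgS0 x hx, hgS0 y hy]
      have e1 : (∑ x, π x * g x) = (∑ x, π x * g' x) + t * ∑ x ∈ S, π x := by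
        have pt : ∀ x, π x * g x = π x * g' x + t * (if x ∈ S then π x else 0) := by
          intro x
          by_cases hx : x ∈ S
          · simp only [hg'def, if_pos hx]
            ring
          · simp [hg'def, hx, hgS0 x hx]
        rw [Finset.sum_congr rfl (fun x _ => pt x), Finset.sum_add_distrib, ← Finset.mul_sum,
          Finset.sum_ite_mem, univ_inter]
      have e2 : (∑ x, ∑ y, w x y * |g x - g y|)
          = (∑ x, ∑ y, w x y * |g' x - g' y|) + t * ∑ x, ∑ y, w x y * |χ x - χ y| := by
        have pt : ∀ x y, w x y * |g x - g y|
            = w x y * |g' x - g' y| + t * (w x y * |χ x - χ y|) := by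
          intro x y; rw [habs x y]; ring
        calc (∑ x, ∑ y, w x y * |g x - g y|)
            = ∑ x, ∑ y, (w x y * |g' x - g' y| + t * (w x y * |χ x - χ y|)) :=
              Finset.sum_congr rfl fun x _ => Finset.sum_congr rfl fun y _ => pt x y
          _ = _ := by
              simp only [Finset.sum_add_distrib, ← Finset.mul_sum]
      have inner1 : ∀ x ∈ S, (∑ y, w x y * |χ x - χ y|) = ∑ y ∈ Sᶜ, w x y := by
        intro x hx
        rw [← Finset.sum_add_sum_compl S (fun y => w x y * |χ x - χ y|)]
        have t1 : ∑ y ∈ S, w x y * |χ x - χ y| = 0 :=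
          Finset.sum_eq_zero fun y hy => by simp [hχdef, hx, hy]
        have t2 : ∑ y ∈ Sᶜ, w x y * |χ x - χ y| = ∑ y ∈ Sᶜ, w x y :=
          Finset.sum_congr rfl fun y hy => by
            have hy' : y ∉ S := mem_compl.mp hy
            simp [hχdef, hx, hy']
        rw [t1, t2, zero_add]
      have inner2 : ∀ x ∈ Sᶜ, (∑ y, w x y * |χ x - χ y|) = ∑ y ∈ S, w x y := by
        intro x hx
        have hx' : x ∉ S := mem_compl.mp hx
        rw [← Finset.sum_add_sum_compl S (fun y => w x y * |χ x - χ y|)]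
        have t1 : ∑ y ∈ S, w x y * |χ x - χ y| = ∑ y ∈ S, w x y :=
          Finset.sum_congr rfl fun y hy => by simp [hχdef, hx', hy]
        have t2 : ∑ y ∈ Sᶜ, w x y * |χ x - χ y| = 0 :=
          Finset.sum_eq_zero fun y hy => by
            have hy' : y ∉ S := mem_compl.mp hy
            simp [hχdef, hx', hy']
        rw [t1, t2, add_zero]
      have e3 : (∑ x, ∑ y, w x y * |χ x - χ y|) = 2 * ∑ x ∈ S, ∑ y ∈ Sᶜ, w x y := by
        rw [← Finset.sum_add_sum_compl S (fun x => ∑ y, w x y * |χ x - χ y|),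
          Finset.sum_congr rfl inner1, Finset.sum_congr rfl inner2]
        have hsymm : ∑ x ∈ Sᶜ, ∑ y ∈ S, w x y = ∑ x ∈ S, ∑ y ∈ Sᶜ, w x y := by
          rw [Finset.sum_comm]
          exact Finset.sum_congr rfl fun x _ => Finset.sum_congr rfl fun y _ => hw_symm _ _
        rw [hsymm]; ring
      have hsub : ((univ : Finset V).filter fun x => g' x ≠ 0) ⊆ S.erase x₀ := by
        intro x hx
        have hx' : g' x ≠ 0 := (mem_filter.mp hx).2
        have hxS : x ∈ S := by
          by_contra h
          exact hx' (by simp [hg'def, h])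
        refine mem_erase.mpr ⟨?_, hxS⟩
        rintro rfl
        apply hx'
        simp [hg'def, hxS, hx₀]
        exact sub_eq_zero.mpr htdef.symm
      have hcard' : ((univ : Finset V).filter fun x => g' x ≠ 0).card ≤ n := by
        have h1 := card_le_card hsub
        have h2 : (S.erase x₀).card = S.card - 1 := card_erase_of_mem hx₀S
        have h3 : 0 < S.card := card_pos.mpr hSne
        omega
      have hhalf' : (∑ x ∈ univ.filter (fun x => g' x ≠ 0), π x) ≤ (∑ x, π x) / 2 :=
        le_trans (Finset.sum_le_sum_of_subset_of_nonneg
          (hsub.trans (erase_subset _ _)) (fun x _ _ => (hπ_pos x).le)) hhalf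
      have hIH := ih g' hcard' hg'0 hhalf'
      have hcut := cheeger_le_cut w π hw_nonneg hπ_pos S hSne hhalf
      have hcut' := mul_le_mul_of_nonneg_left hcut ht_pos.le
      calc cheeger w π * (∑ x, π x * g x)
          = cheeger w π * (∑ x, π x * g' x) + t * (cheeger w π * ∑ x ∈ S, π x) := by
            rw [e1]; ring
        _ ≤ (1/2) * (∑ x, ∑ y, w x y * |g' x - g' y|) + t * (∑ x ∈ S, ∑ y ∈ Sᶜ, w x y) :=
            add_le_add hIH hcut'
        _ = (1/2) * ∑ x, ∑ y, w x y * |g x - g y| := by rw [e2, e3]; ring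

private lemma part_bound (hw_symm : ∀ x y, w x y = w y x) (hw_nonneg : ∀ x y, 0 ≤ w x y)
    (hπ_pos : ∀ x, 0 < π x)
    (dmax : ℝ) (hdmax0 : 0 ≤ dmax) (hd : ∀ x, (∑ y, w x y) ≤ dmax * π x)
    (p : V → ℝ) (hp : ∀ x, 0 ≤ p x)
    (hhalf : (∑ x ∈ univ.filter (fun x => p x ≠ 0), π x) ≤ (∑ x, π x) / 2) :
    (cheeger w π)^2 * (∑ x, π x * p x ^ 2) ≤
      dmax * (∑ x, ∑ y, w x y * (p x - p y)^2) := by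
  classical
  have hch0 : 0 ≤ cheeger w π := cheeger_nonneg w π hw_nonneg hπ_pos
  have hfilter : ((univ : Finset V).filter fun x => p x ^ 2 ≠ 0)
      = (univ : Finset V).filter fun x => p x ≠ 0 := by
    apply filter_congr
    intro x _
    simp [pow_eq_zero_iff]
  have hA : cheeger w π * (∑ x, π x * p x ^ 2)
      ≤ (1/2) * ∑ x, ∑ y, w x y * |p x ^ 2 - p y ^ 2| := by
    have := coarea w π hw_symm hw_nonneg hπ_pos
      ((univ : Finset V).filter fun x => p x ^ 2 ≠ 0).card
      (fun x => p x ^ 2) le_rfl (fun x => sq_nonneg _) (by rw [hfilter]; exact hhalf)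
    exact this
  set Q := ∑ x, π x * p x ^ 2 with hQdef
  set A0 := ∑ x, ∑ y, w x y * |p x ^ 2 - p y ^ 2| with hA0def
  set E2 := ∑ x, ∑ y, w x y * (p x - p y)^2 with hE2def
  set B := ∑ x, ∑ y, w x y * (p x + p y)^2 with hBdef
  have hQ0 : 0 ≤ Q := Finset.sum_nonneg fun x _ => mul_nonneg (hπ_pos x).le (sq_nonneg _)
  have hE20 : 0 ≤ E2 := Finset.sum_nonneg fun x _ => Finset.sum_nonneg fun y _ =>
    mul_nonneg (hw_nonneg x y) (sq_nonneg _)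
  have hCS : A0 ^ 2 ≤ E2 * B := by
    have hcs := Finset.sum_mul_sq_le_sq_mul_sq (univ : Finset (V × V))
      (fun z => Real.sqrt (w z.1 z.2) * |p z.1 - p z.2|)
      (fun z => Real.sqrt (w z.1 z.2) * (p z.1 + p z.2))
    have l1 : (∑ z : V × V, (Real.sqrt (w z.1 z.2) * |p z.1 - p z.2|)
        * (Real.sqrt (w z.1 z.2) * (p z.1 + p z.2))) = A0 := by
      rw [Fintype.sum_prod_type, hA0def]
      apply Finset.sum_congr rfl
      intro x _
      apply Finset.sum_congr rfl
      intro y _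
      dsimp only
      have h1 : Real.sqrt (w x y) * Real.sqrt (w x y) = w x y :=
        Real.mul_self_sqrt (hw_nonneg _ _)
      have h2 : |p x - p y| * (p x + p y) = |p x ^ 2 - p y ^ 2| := by
        rw [← abs_of_nonneg (add_nonneg (hp x) (hp y)), ← abs_mul]
        congr 1
        ring
      calc (Real.sqrt (w x y) * |p x - p y|) * (Real.sqrt (w x y) * (p x + p y))
          = (Real.sqrt (w x y) * Real.sqrt (w x y)) * (|p x - p y| * (p x + p y)) := by
            ring
        _ = w x y * |p x ^ 2 - p y ^ 2| := by rw [h1, h2]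
    have l2 : (∑ z : V × V, (Real.sqrt (w z.1 z.2) * |p z.1 - p z.2|) ^ 2) = E2 := by
      rw [Fintype.sum_prod_type, hE2def]
      apply Finset.sum_congr rfl
      intro x _
      apply Finset.sum_congr rfl
      intro y _
      dsimp only
      rw [mul_pow, sq_abs, Real.sq_sqrt (hw_nonneg _ _)]
    have l3 : (∑ z : V × V, (Real.sqrt (w z.1 z.2) * (p z.1 + p z.2)) ^ 2) = B := by
      rw [Fintype.sum_prod_type, hBdef]
      apply Finset.sum_congr rfl
      intro x _
      apply Finset.sum_congr rfl
      intro y _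
      dsimp only
      rw [mul_pow, Real.sq_sqrt (hw_nonneg _ _)]
    rw [l1, l2, l3] at hcs
    exact hcs
  have hBle : B ≤ 4 * dmax * Q := by
    have step1 : B ≤ ∑ x, ∑ y, w x y * (2 * p x ^ 2 + 2 * p y ^ 2) := by
      apply Finset.sum_le_sum
      intro x _
      apply Finset.sum_le_sum
      intro y _
      have h : (p x + p y)^2 ≤ 2 * p x ^ 2 + 2 * p y ^ 2 := by nlinarith [sq_nonneg (p x - p y)]
      exact mul_le_mul_of_nonneg_left h (hw_nonneg x y)
    have hsum_symm : ∀ x, (∑ y, w y x) = ∑ y, w x y :=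
      fun x => Finset.sum_congr rfl fun y _ => hw_symm y x
    have split : (∑ x, ∑ y, w x y * (2 * p x ^ 2 + 2 * p y ^ 2))
        = 4 * ∑ x, (∑ y, w x y) * p x ^ 2 := by
      have e1 : (∑ x, ∑ y, w x y * (2 * p x ^ 2 + 2 * p y ^ 2))
          = (∑ x, ∑ y, w x y * (2 * p x ^ 2)) + ∑ x, ∑ y, w x y * (2 * p y ^ 2) := by
        simp only [mul_add, Finset.sum_add_distrib]
      have e2 : (∑ x, ∑ y, w x y * (2 * p x ^ 2)) = 2 * ∑ x, (∑ y, w x y) * p x ^ 2 := by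
        rw [Finset.mul_sum]
        apply Finset.sum_congr rfl
        intro x _
        rw [← Finset.sum_mul]
        ring
      have e3 : (∑ x, ∑ y, w x y * (2 * p y ^ 2)) = 2 * ∑ x, (∑ y, w x y) * p x ^ 2 := by
        rw [Finset.sum_comm, Finset.mul_sum]
        apply Finset.sum_congr rfl
        intro y _
        rw [← Finset.sum_mul, hsum_symm y]
        ring
      rw [e1, e2, e3]
      ring
    have step2 : (∑ x, (∑ y, w x y) * p x ^ 2) ≤ dmax * Q := by
      rw [hQdef, Finset.mul_sum]
      apply Finset.sum_le_sum
      intro x _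
      calc (∑ y, w x y) * p x ^ 2 ≤ (dmax * π x) * p x ^ 2 :=
            mul_le_mul_of_nonneg_right (hd x) (sq_nonneg _)
        _ = dmax * (π x * p x ^ 2) := by ring
    calc B ≤ ∑ x, ∑ y, w x y * (2 * p x ^ 2 + 2 * p y ^ 2) := step1
      _ = 4 * ∑ x, (∑ y, w x y) * p x ^ 2 := split
      _ ≤ 4 * (dmax * Q) := by linarith
      _ = 4 * dmax * Q := by ring
  have hchain : (cheeger w π * Q)^2 ≤ dmax * E2 * Q := by
    have h0 : 0 ≤ cheeger w π * Q := mul_nonneg hch0 hQ0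
    have h2 : (cheeger w π * Q)^2 ≤ ((1/2) * A0)^2 := by nlinarith [hA]
    have h5 : E2 * B ≤ E2 * (4 * dmax * Q) := mul_le_mul_of_nonneg_left hBle hE20
    nlinarith [hCS]
  rcases eq_or_lt_of_le hQ0 with hQe | hQp
  · rw [← hQe, mul_zero]
    exact mul_nonneg hdmax0 hE20
  · have h6 : (cheeger w π ^ 2 * Q) * Q ≤ (dmax * E2) * Q := by nlinarith [hchain]
    exact le_of_mul_le_mul_right h6 hQp

private lemma exists_median [Nonempty V] (hπ_pos : ∀ x, 0 < π x) (f : V → ℝ) :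
    ∃ m : ℝ, (∑ x ∈ univ.filter (fun x => m < f x), π x) ≤ (∑ x, π x) / 2 ∧
             (∑ x ∈ univ.filter (fun x => f x < m), π x) ≤ (∑ x, π x) / 2 := by
  classical
  have hT0 : 0 < ∑ x, π x := Finset.sum_pos (fun x _ => hπ_pos x) univ_nonempty
  set T := ∑ x, π x with hTdef
  set I := (univ : Finset V).image f with hIdef
  set C := I.filter (fun c => T / 2 ≤ ∑ x ∈ univ.filter (fun x => f x ≤ c), π x) with hCdef
  have hIne : I.Nonempty := univ_nonempty.image f
  have hCne : C.Nonempty := by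
    refine ⟨I.max' hIne, mem_filter.mpr ⟨max'_mem _ _, ?_⟩⟩
    have hfull : ((univ : Finset V).filter fun x => f x ≤ I.max' hIne) = univ := by
      apply Finset.filter_true_of_mem
      intro x _
      exact le_max' I (f x) (mem_image_of_mem f (mem_univ x))
    rw [hfull]
    linarith
  set m := C.min' hCne with hmdef
  have hmC : m ∈ C := min'_mem _ _
  have hm1 : T / 2 ≤ ∑ x ∈ univ.filter (fun x => f x ≤ m), π x := (mem_filter.mp hmC).2
  refine ⟨m, ?_, ?_⟩
  · have hsplit : (∑ x ∈ univ.filter (fun x => f x ≤ m), π x)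
        + (∑ x ∈ univ.filter (fun x => ¬ f x ≤ m), π x) = T :=
      Finset.sum_filter_add_sum_filter_not univ _ π
    have heq : ((univ : Finset V).filter fun x => m < f x)
        = (univ : Finset V).filter fun x => ¬ f x ≤ m := by
      apply filter_congr
      intro x _
      simp [not_le]
    rw [heq]
    linarith
  · by_cases hne : ((univ : Finset V).filter fun x => f x < m).Nonempty
    · set J := ((univ : Finset V).filter fun x => f x < m).image f with hJdef
      have hJne : J.Nonempty := hne.image f
      set c := J.max' hJne with hcdef
      obtain ⟨x₁, hx₁, hcx₁⟩ := mem_image.mp (J.max'_mem hJne)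
      have hcm : c < m := by
        rw [hcdef, ← hcx₁]
        exact (mem_filter.mp hx₁).2
      have hcI : c ∈ I := by
        rw [hcdef, ← hcx₁]
        exact mem_image_of_mem f (mem_univ x₁)
      have heq : ((univ : Finset V).filter fun x => f x < m)
          = (univ : Finset V).filter fun x => f x ≤ c := by
        apply filter_congr
        intro x _
        constructor
        · intro h
          exact le_max' J (f x) (mem_image_of_mem f (mem_filter.mpr ⟨mem_univ x, h⟩))
        · intro h
          exact lt_of_le_of_lt h hcm
      have hcnotC : c ∉ C := fun h => absurd (min'_le C c h) (not_le.mpr hcm)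
      have hlt : ¬ (T / 2 ≤ ∑ x ∈ univ.filter (fun x => f x ≤ c), π x) :=
        fun h => hcnotC (mem_filter.mpr ⟨hcI, h⟩)
      rw [heq]
      linarith [not_le.mp hlt]
    · rw [not_nonempty_iff_eq_empty.mp hne, sum_empty]
      linarith

end CheegerHelpers

/-- Discrete Cheeger inequality: `λ₁(G) ≥ h(G)² / (2 d_max)` where
`d_max = max_x (∑_y w x y) / π x`. -/
theorem cheeger_inequality {V : Type*} [Fintype V] [DecidableEq V] [Nonempty V]
    (w : V → V → ℝ) (π : V → ℝ)
    (hw_symm : ∀ x y, w x y = w y x) (hw_nonneg : ∀ x y, 0 ≤ w x y)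
    (hπ_pos : ∀ x, 0 < π x)
    (dmax : ℝ) (hdmax : dmax = sSup {r : ℝ | ∃ x : V, r = (∑ y, w x y) / π x})
    (hdmax_pos : 0 < dmax) :
    lam1 w π ≥ (cheeger w π) ^ 2 / (2 * dmax) := by
  classical
  have hT0 : 0 < ∑ x, π x := Finset.sum_pos (fun x _ => hπ_pos x) univ_nonempty
  -- degree bound
  have hd : ∀ x, (∑ y, w x y) ≤ dmax * π x := by
    intro x
    have hset : {r : ℝ | ∃ x : V, r = (∑ y, w x y) / π x}
        = Set.range (fun x : V => (∑ y, w x y) / π x) := by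
      ext r
      constructor
      · rintro ⟨x, rfl⟩; exact ⟨x, rfl⟩
      · rintro ⟨x, rfl⟩; exact ⟨x, rfl⟩
    have hb : BddAbove {r : ℝ | ∃ x : V, r = (∑ y, w x y) / π x} := by
      rw [hset]; exact (Set.finite_range _).bddAbove
    have hle : (∑ y, w x y) / π x ≤ dmax := by
      rw [hdmax]
      exact le_csSup hb ⟨x, rfl⟩
    exact (div_le_iff₀ (hπ_pos x)).mp hle
  by_cases hsing : ∃ a b : V, a ≠ b
  · obtain ⟨a, b, hab⟩ := hsing
    rw [ge_iff_le]
    show (cheeger w π) ^ 2 / (2 * dmax) ≤ sInf _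
    apply le_csInf
    · -- the Rayleigh set is nonempty
      set f : V → ℝ := fun x => if x = a then π b else if x = b then -(π a) else 0 with hf
      refine ⟨_, f, ?_, ?_, rfl⟩
      · have pt : ∀ x, π x * f x
            = (if x = a then π a * π b else 0) + (if x = b then -(π a * π b) else 0) := by
          intro x
          by_cases hx : x = a
          · subst hx
            simp [hf, hab]
          · by_cases hx' : x = b
            · subst hx'
              simp [hf, hx]
              ring
            · simp [hf, hx, hx']
        rw [Finset.sum_congr rfl fun x _ => pt x, Finset.sum_add_distrib]
        rw [Finset.sum_ite_eq' univ a (fun _ => π a * π b),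
          Finset.sum_ite_eq' univ b (fun _ => -(π a * π b))]
        simp
      · intro h
        have : f a = 0 := congrFun h a
        simp [hf] at this
        exact (hπ_pos b).ne' this
    · rintro r ⟨f, hsum, hne, rfl⟩
      set D := ∑ x, π x * f x ^ 2 with hD
      have hD0 : 0 < D := by
        obtain ⟨x, hx⟩ := Function.ne_iff.mp hne
        exact Finset.sum_pos' (fun y _ => mul_nonneg (hπ_pos y).le (sq_nonneg _))
          ⟨x, mem_univ x, mul_pos (hπ_pos x) (pow_two_pos_of_ne_zero hx)⟩
      obtain ⟨m, hm1, hm2⟩ := exists_median π hπ_pos f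
      set gp : V → ℝ := fun x => max (f x - m) 0 with hgp
      set gm : V → ℝ := fun x => max (-(f x - m)) 0 with hgm
      have hgp0 : ∀ x, 0 ≤ gp x := fun x => le_max_right _ _
      have hgm0 : ∀ x, 0 ≤ gm x := fun x => le_max_right _ _
      have hsupp_p : ((univ : Finset V).filter fun x => gp x ≠ 0)
          ⊆ (univ : Finset V).filter fun x => m < f x := by
        intro x hx
        simp only [mem_filter, mem_univ, true_and] at hx ⊢
        by_contra h
        push_neg at h
        exact hx (max_eq_right (by linarith))
      have hsupp_m : ((univ : Finset V).filter fun x => gm x ≠ 0)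
          ⊆ (univ : Finset V).filter fun x => f x < m := by
        intro x hx
        simp only [mem_filter, mem_univ, true_and] at hx ⊢
        by_contra h
        push_neg at h
        exact hx (max_eq_right (by linarith))
      have hhalf_p : (∑ x ∈ univ.filter (fun x => gp x ≠ 0), π x) ≤ (∑ x, π x) / 2 :=
        le_trans (Finset.sum_le_sum_of_subset_of_nonneg hsupp_p fun x _ _ => (hπ_pos x).le) hm1
      have hhalf_m : (∑ x ∈ univ.filter (fun x => gm x ≠ 0), π x) ≤ (∑ x, π x) / 2 :=
        le_trans (Finset.sum_le_sum_of_subset_of_nonneg hsupp_m fun x _ _ => (hπ_pos x).le) hm2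
      have h_p := part_bound w π hw_symm hw_nonneg hπ_pos dmax hdmax_pos.le hd gp hgp0 hhalf_p
      have h_m := part_bound w π hw_symm hw_nonneg hπ_pos dmax hdmax_pos.le hd gm hgm0 hhalf_m
      -- Dirichlet energy splits
      have hsplit : (∑ x, ∑ y, w x y * (gp x - gp y)^2) + (∑ x, ∑ y, w x y * (gm x - gm y)^2)
          ≤ ∑ x, ∑ y, w x y * (f x - f y)^2 := by
        have pt : ∀ x y, w x y * (gp x - gp y)^2 + w x y * (gm x - gm y)^2
            ≤ w x y * (f x - f y)^2 := by
          intro x y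
          have key : (gp x - gp y)^2 + (gm x - gm y)^2 ≤ (f x - f y)^2 := by
            have h5 := key5 (f x - m) (f y - m)
            have e : (f x - m) - (f y - m) = f x - f y := by ring
            rw [e] at h5
            exact h5
          nlinarith [mul_le_mul_of_nonneg_left key (hw_nonneg x y)]
        calc (∑ x, ∑ y, w x y * (gp x - gp y)^2) + (∑ x, ∑ y, w x y * (gm x - gm y)^2)
            = ∑ x, ∑ y, (w x y * (gp x - gp y)^2 + w x y * (gm x - gm y)^2) := by
              simp only [Finset.sum_add_distrib]
          _ ≤ ∑ x, ∑ y, w x y * (f x - f y)^2 :=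
              Finset.sum_le_sum fun x _ => Finset.sum_le_sum fun y _ => pt x y
      have hQsplit : (∑ x, π x * gp x ^ 2) + (∑ x, π x * gm x ^ 2)
          = ∑ x, π x * (f x - m)^2 := by
        rw [← Finset.sum_add_distrib]
        apply Finset.sum_congr rfl
        intro x _
        have hsq : gp x ^ 2 + gm x ^ 2 = (f x - m)^2 := by
          rcases le_total (f x - m) 0 with h | h
          · rw [hgp, hgm]
            dsimp only
            rw [max_eq_right h, max_eq_left (neg_nonneg.mpr h)]
            ring
          · rw [hgp, hgm]
            dsimp only
            rw [max_eq_left h, max_eq_right (neg_nonpos.mpr h)]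
            ring
        calc π x * gp x ^ 2 + π x * gm x ^ 2 = π x * (gp x ^ 2 + gm x ^ 2) := by ring
          _ = π x * (f x - m)^2 := by rw [hsq]
      have hDm : D ≤ ∑ x, π x * (f x - m)^2 := by
        have expand : (∑ x, π x * (f x - m)^2)
            = D - 2*m*(∑ x, π x * f x) + m^2 * ∑ x, π x := by
          have pt : ∀ x, π x * (f x - m)^2
              = π x * f x ^ 2 - 2*m*(π x * f x) + m^2 * π x := fun x => by ring
          rw [Finset.sum_congr rfl fun x _ => pt x, Finset.sum_add_distrib,
            Finset.sum_sub_distrib, ← Finset.mul_sum, ← Finset.mul_sum, hD]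
        rw [expand, hsum]
        nlinarith [sq_nonneg m, hT0.le]
      -- combine
      have hfinal : (cheeger w π)^2 * D ≤ dmax * (∑ x, ∑ y, w x y * (f x - f y)^2) := by
        have c1 : (cheeger w π)^2 * ((∑ x, π x * gp x ^ 2) + (∑ x, π x * gm x ^ 2))
            ≤ dmax * ((∑ x, ∑ y, w x y * (gp x - gp y)^2)
              + (∑ x, ∑ y, w x y * (gm x - gm y)^2)) := by
          nlinarith [h_p, h_m]
        have c2 : (cheeger w π)^2 * D ≤ (cheeger w π)^2 * ∑ x, π x * (f x - m)^2 :=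
          mul_le_mul_of_nonneg_left hDm (sq_nonneg _)
        rw [← hQsplit] at c2
        nlinarith [mul_le_mul_of_nonneg_left hsplit hdmax_pos.le]
      rw [div_le_div_iff₀ (by linarith) hD0]
      nlinarith [hfinal]
  · -- the one-vertex case
    push_neg at hsing
    have hlam : lam1 w π = 0 := by
      unfold lam1
      have hempty : {r : ℝ | ∃ f : V → ℝ, (∑ x, π x * f x) = 0 ∧ f ≠ 0 ∧
          r = ((1 / 2) * ∑ x, ∑ y, w x y * (f x - f y) ^ 2) / (∑ x, π x * f x ^ 2)} = ∅ := by
        rw [Set.eq_empty_iff_forall_notMem]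
        rintro r ⟨f, hsum, hne, _⟩
        apply hne
        funext x
        have hU : (univ : Finset V) = {x} := by
          ext y
          simp [hsing y x]
        have hsum' : π x * f x = 0 := by
          rw [hU, sum_singleton] at hsum
          exact hsum
        have := mul_eq_zero.mp hsum'
        rcases this with h | h
        · exact absurd h (hπ_pos x).ne'
        · exact h
      rw [hempty]
      exact Real.sInf_empty
    have hch : cheeger w π = 0 := by
      unfold cheeger
      have hempty : {r : ℝ | ∃ S : Finset V, S.Nonempty ∧ (∑ x ∈ S, π x) ≤ (∑ x, π x) / 2 ∧
          r = (∑ x ∈ S, ∑ y ∈ Sᶜ, w x y) / (∑ x ∈ S, π x)} = ∅ := by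
        rw [Set.eq_empty_iff_forall_notMem]
        rintro r ⟨S, hSne, hhalf, _⟩
        obtain ⟨x, hx⟩ := hSne
        have hSU : S = univ := eq_univ_iff_forall.mpr fun y => (hsing y x) ▸ hx
        rw [hSU] at hhalf
        linarith
      rw [hempty]
      exact Real.sInf_empty
    rw [hlam, hch]
    rw [ge_iff_le]
    rw [zero_pow (by norm_num), zero_div]
end

section
/- For any function f: {1,...,n} -> R with mean m = (1/n) * sum_i f(i), one has sum_{i=1}^{n-1} (f(i)-f(i+1))^2 >= (1/n^2) * sum_{i=1}^n (f(i)-m)^2. -/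
open Finset

lemma tel_sq (n : ℕ) (f : ℕ → ℝ) (i j : ℕ) (hij : i ≤ j) (hjn : j < n) :
    (f i - f j) ^ 2 ≤ ((n : ℝ) - 1) * ∑ k ∈ Finset.range (n - 1), (f k - f (k + 1)) ^ 2 := by
  have htel : f j - f i = ∑ k ∈ Finset.Ico i j, (f (k + 1) - f k) := by
    rw [Finset.sum_Ico_eq_sub _ hij, Finset.sum_range_sub, Finset.sum_range_sub]
    ring
  have h1 : (f i - f j) ^ 2 = (∑ k ∈ Finset.Ico i j, (f (k + 1) - f k)) ^ 2 := by
    rw [← htel]; ring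
  have hcs := sq_sum_le_card_mul_sum_sq (s := Finset.Ico i j)
    (f := fun k => f (k + 1) - f k)
  have hcard : (#(Finset.Ico i j) : ℝ) ≤ (n : ℝ) - 1 := by
    rw [Nat.card_Ico]
    have : j - i ≤ n - 1 := by omega
    have h2 : ((j - i : ℕ) : ℝ) ≤ ((n - 1 : ℕ) : ℝ) := by exact_mod_cast this
    have h3 : ((n - 1 : ℕ) : ℝ) = (n : ℝ) - 1 := by
      rw [Nat.cast_sub (by omega)]; simp
    linarith
  have hsub : ∑ k ∈ Finset.Ico i j, (f (k + 1) - f k) ^ 2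
      ≤ ∑ k ∈ Finset.range (n - 1), (f k - f (k + 1)) ^ 2 := by
    have : ∀ k, (f (k + 1) - f k) ^ 2 = (f k - f (k + 1)) ^ 2 := fun k => by ring
    simp_rw [this]
    apply Finset.sum_le_sum_of_subset_of_nonneg
    · intro k hk
      simp only [Finset.mem_Ico, Finset.mem_range] at *
      omega
    · intro k _ _; positivity
  have hsq : (0:ℝ) ≤ ∑ k ∈ Finset.Ico i j, (f (k + 1) - f k) ^ 2 :=
    Finset.sum_nonneg fun k _ => sq_nonneg _
  calc (f i - f j) ^ 2 ≤ (#(Finset.Ico i j) : ℝ) * ∑ k ∈ Finset.Ico i j, (f (k + 1) - f k) ^ 2 := by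
        rw [h1]; exact_mod_cast hcs
    _ ≤ ((n : ℝ) - 1) * ∑ k ∈ Finset.range (n - 1), (f k - f (k + 1)) ^ 2 := by
        apply mul_le_mul hcard hsub hsq
        have : (1:ℝ) ≤ n := by
          have : 1 ≤ n := by omega
          exact_mod_cast this
        linarith

/-- Discrete Poincaré inequality for the path on `n` vertices: for any
`f : {0,…,n-1} → ℝ` with mean `m`, the Dirichlet energy over path edges
dominates `1/n²` times the variance. -/
theorem path_poincare (n : ℕ) (hn : 0 < n) (f : ℕ → ℝ)
    (m : ℝ) (hm : m = (1 / (n : ℝ)) * ∑ i ∈ Finset.range n, f i) :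
    ∑ i ∈ Finset.range (n - 1), (f i - f (i + 1)) ^ 2
      ≥ (1 / (n : ℝ) ^ 2) * ∑ i ∈ Finset.range n, (f i - m) ^ 2 := by
  have hnR : (0:ℝ) < n := by exact_mod_cast hn
  set E := ∑ i ∈ Finset.range (n - 1), (f i - f (i + 1)) ^ 2 with hE
  have hEnn : 0 ≤ E := Finset.sum_nonneg fun i _ => sq_nonneg _
  -- any pair difference bounded
  have pair : ∀ i ∈ Finset.range n, ∀ j ∈ Finset.range n,
      (f i - f j) ^ 2 ≤ ((n : ℝ) - 1) * E := by
    intro i hi j hj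
    simp only [Finset.mem_range] at hi hj
    rcases le_total i j with h | h
    · exact tel_sq n f i j h hj
    · have := tel_sq n f j i h hi
      have heq : (f i - f j) ^ 2 = (f j - f i) ^ 2 := by ring
      rwa [heq]
  -- each deviation from mean bounded
  have dev : ∀ i ∈ Finset.range n, (f i - m) ^ 2 ≤ ((n : ℝ) - 1) * E := by
    intro i hi
    have hrepr : (n : ℝ) * (f i - m) = ∑ j ∈ Finset.range n, (f i - f j) := by
      rw [Finset.sum_sub_distrib, Finset.sum_const, Finset.card_range, hm]
      field_simp
      ring
    have hcs := sq_sum_le_card_mul_sum_sq (s := Finset.range n)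
      (f := fun j => f i - f j)
    have hcs' : ((n:ℝ) * (f i - m)) ^ 2 ≤ (n : ℝ) * ∑ j ∈ Finset.range n, (f i - f j) ^ 2 := by
      rw [hrepr]
      simpa using hcs
    have hsum : ∑ j ∈ Finset.range n, (f i - f j) ^ 2 ≤ (n : ℝ) * (((n : ℝ) - 1) * E) := by
      calc ∑ j ∈ Finset.range n, (f i - f j) ^ 2
          ≤ ∑ _j ∈ Finset.range n, ((n : ℝ) - 1) * E :=
            Finset.sum_le_sum (fun j hj => pair i hi j hj)
        _ = (n : ℝ) * (((n : ℝ) - 1) * E) := by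
            rw [Finset.sum_const, Finset.card_range]; ring
    nlinarith [hcs', hsum, mul_pos hnR hnR, sq_nonneg (f i - m), mul_le_mul_of_nonneg_left hsum (le_of_lt hnR)]
  have hvar : ∑ i ∈ Finset.range n, (f i - m) ^ 2 ≤ (n : ℝ) ^ 2 * E := by
    calc ∑ i ∈ Finset.range n, (f i - m) ^ 2
        ≤ ∑ _i ∈ Finset.range n, ((n : ℝ) - 1) * E := Finset.sum_le_sum dev
      _ = (n : ℝ) * (((n : ℝ) - 1) * E) := by rw [Finset.sum_const, Finset.card_range]; ring
      _ ≤ (n : ℝ) ^ 2 * E := by nlinarith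
  rw [ge_iff_le, div_mul_eq_mul_div, one_mul, div_le_iff₀ (by positivity)]
  linarith [hvar]
end

section
/- Let Q_h be the weighted graph with vertex set {0,1,...,h}, edge weights w(j,j+1)=2^{j+1}, and vertex weights pi(j)=2^j. Then for every function g: {0,...,h} -> R with sum_{j=0}^h 2^j g(j) = 0, one has sum_{j=0}^{h-1} 2^{j+1} (g(j)-g(j+1))^2 >= (1/6) * sum_{j=0}^h 2^j g(j)^2. -/
open Finset

private lemma tele (g : ℕ → ℝ) {j h : ℕ} (hjh : j ≤ h) :
    ∑ k ∈ Finset.Ico j h, (g k - g (k + 1)) = g j - g h := by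
  induction h, hjh using Nat.le_induction with
  | base => simp
  | succ n hn ih => rw [Finset.sum_Ico_succ_top hn, ih]; ring

private lemma geo1 (j h : ℕ) : ∑ k ∈ Finset.Ico j h, ((3 : ℝ) / 4) ^ k ≤ 4 * (3 / 4) ^ j := by
  rw [Finset.sum_Ico_eq_sum_range]
  have : ∀ k, ((3 : ℝ) / 4) ^ (j + k) = (3 / 4) ^ j * (3 / 4) ^ k := fun k => pow_add _ _ _
  rw [Finset.sum_congr rfl fun k _ => this k, ← Finset.mul_sum]
  have h1 : ∑ k ∈ Finset.range (h - j), ((3 : ℝ) / 4) ^ k ≤ 4 := by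
    rw [geom_sum_eq (by norm_num : ((3 : ℝ) / 4) ≠ 1)]
    have : (0 : ℝ) ≤ (3 / 4 : ℝ) ^ (h - j) := by positivity
    rw [div_le_iff_of_neg (by norm_num : ((3 : ℝ) / 4 - 1) < 0)]
    linarith
  have h2 : (0 : ℝ) ≤ (3 / 4 : ℝ) ^ j := by positivity
  calc ((3 : ℝ) / 4) ^ j * ∑ k ∈ Finset.range (h - j), ((3 : ℝ) / 4) ^ k
      ≤ (3 / 4 : ℝ) ^ j * 4 := by
        exact mul_le_mul_of_nonneg_left h1 h2
    _ = 4 * (3 / 4) ^ j := by ring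

private lemma geo2 (k : ℕ) : ∑ j ∈ Finset.range (k + 1), ((3 : ℝ) / 2) ^ j ≤ 3 * (3 / 2) ^ k := by
  rw [geom_sum_eq (by norm_num : ((3 : ℝ) / 2) ≠ 1)]
  have : ((3 : ℝ) / 2) ^ (k + 1) = (3 / 2) * (3 / 2) ^ k := by rw [pow_succ]; ring
  rw [div_le_iff₀ (by norm_num : (0 : ℝ) < 3 / 2 - 1)]
  nlinarith [this]

private lemma cs_step (g : ℕ → ℝ) {j h : ℕ} (hjh : j ≤ h) :
    (g j - g h) ^ 2 ≤
      4 * (3 / 4) ^ j * ∑ k ∈ Finset.Ico j h, ((4 : ℝ) / 3) ^ k * (g k - g (k + 1)) ^ 2 := by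
  have key : g j - g h = ∑ k ∈ Finset.Ico j h,
      (Real.sqrt ((3 / 4) ^ k)) * (Real.sqrt ((4 / 3) ^ k) * (g k - g (k + 1))) := by
    rw [← tele g hjh]
    refine Finset.sum_congr rfl fun k _ => ?_
    rw [← mul_assoc, ← Real.sqrt_mul (by positivity), ← mul_pow]
    norm_num
  rw [key]
  calc (∑ k ∈ Finset.Ico j h,
        (Real.sqrt ((3 / 4) ^ k)) * (Real.sqrt ((4 / 3) ^ k) * (g k - g (k + 1)))) ^ 2
      ≤ (∑ k ∈ Finset.Ico j h, (Real.sqrt ((3 / 4) ^ k)) ^ 2) *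
        ∑ k ∈ Finset.Ico j h, (Real.sqrt ((4 / 3) ^ k) * (g k - g (k + 1))) ^ 2 :=
        sum_mul_sq_le_sq_mul_sq _ _ _
    _ = (∑ k ∈ Finset.Ico j h, ((3 : ℝ) / 4) ^ k) *
        ∑ k ∈ Finset.Ico j h, ((4 : ℝ) / 3) ^ k * (g k - g (k + 1)) ^ 2 := by
        congr 1
        · exact Finset.sum_congr rfl fun k _ => Real.sq_sqrt (by positivity)
        · refine Finset.sum_congr rfl fun k _ => ?_
          rw [mul_pow, Real.sq_sqrt (by positivity)]
    _ ≤ 4 * (3 / 4) ^ j *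
        ∑ k ∈ Finset.Ico j h, ((4 : ℝ) / 3) ^ k * (g k - g (k + 1)) ^ 2 := by
        refine mul_le_mul_of_nonneg_right (geo1 j h) ?_
        exact Finset.sum_nonneg fun k _ => by positivity

private lemma key_lemma (h : ℕ) (g : ℕ → ℝ) :
    ∑ j ∈ Finset.range (h + 1), (2 : ℝ) ^ j * (g j - g h) ^ 2 ≤
      6 * ∑ k ∈ Finset.range h, (2 : ℝ) ^ (k + 1) * (g k - g (k + 1)) ^ 2 := by
  have step1 : ∑ j ∈ Finset.range (h + 1), (2 : ℝ) ^ j * (g j - g h) ^ 2 ≤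
      ∑ j ∈ Finset.range (h + 1), ∑ k ∈ Finset.Ico j h,
        4 * (3 / 2 : ℝ) ^ j * ((4 / 3) ^ k * (g k - g (k + 1)) ^ 2) := by
    refine Finset.sum_le_sum fun j hj => ?_
    have hjh : j ≤ h := Nat.lt_succ_iff.mp (Finset.mem_range.mp hj)
    calc (2 : ℝ) ^ j * (g j - g h) ^ 2
        ≤ (2 : ℝ) ^ j * (4 * (3 / 4) ^ j *
            ∑ k ∈ Finset.Ico j h, ((4 : ℝ) / 3) ^ k * (g k - g (k + 1)) ^ 2) :=
          mul_le_mul_of_nonneg_left (cs_step g hjh) (by positivity)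
      _ = ∑ k ∈ Finset.Ico j h,
            4 * (3 / 2 : ℝ) ^ j * ((4 / 3) ^ k * (g k - g (k + 1)) ^ 2) := by
          rw [Finset.mul_sum, Finset.mul_sum]
          refine Finset.sum_congr rfl fun k _ => ?_
          have hp : (2 : ℝ) ^ j * (3 / 4 : ℝ) ^ j = (3 / 2 : ℝ) ^ j := by
            rw [← mul_pow]; norm_num
          linear_combination (4 * ((4 / 3 : ℝ) ^ k * (g k - g (k + 1)) ^ 2)) * hp
  have step2 : ∑ j ∈ Finset.range (h + 1), ∑ k ∈ Finset.Ico j h,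
        4 * (3 / 2 : ℝ) ^ j * ((4 / 3) ^ k * (g k - g (k + 1)) ^ 2) =
      ∑ k ∈ Finset.range h, ∑ j ∈ Finset.range (k + 1),
        4 * (3 / 2 : ℝ) ^ j * ((4 / 3) ^ k * (g k - g (k + 1)) ^ 2) := by
    rw [Finset.sum_range_succ, Finset.Ico_self, Finset.sum_empty, add_zero,
      Finset.range_eq_Ico, Finset.sum_Ico_Ico_comm]
    simp only [Finset.range_eq_Ico]
  have step3 : ∑ k ∈ Finset.range h, ∑ j ∈ Finset.range (k + 1),
        4 * (3 / 2 : ℝ) ^ j * ((4 / 3) ^ k * (g k - g (k + 1)) ^ 2) ≤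
      6 * ∑ k ∈ Finset.range h, (2 : ℝ) ^ (k + 1) * (g k - g (k + 1)) ^ 2 := by
    rw [Finset.mul_sum]
    refine Finset.sum_le_sum fun k _ => ?_
    have inner : ∑ j ∈ Finset.range (k + 1),
        4 * (3 / 2 : ℝ) ^ j * ((4 / 3) ^ k * (g k - g (k + 1)) ^ 2) =
        (4 * ((4 / 3 : ℝ) ^ k * (g k - g (k + 1)) ^ 2)) *
          ∑ j ∈ Finset.range (k + 1), ((3 : ℝ) / 2) ^ j := by
      rw [Finset.mul_sum]
      exact Finset.sum_congr rfl fun j _ => by ring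
    rw [inner]
    calc (4 * ((4 / 3 : ℝ) ^ k * (g k - g (k + 1)) ^ 2)) *
          ∑ j ∈ Finset.range (k + 1), ((3 : ℝ) / 2) ^ j
        ≤ (4 * ((4 / 3 : ℝ) ^ k * (g k - g (k + 1)) ^ 2)) * (3 * (3 / 2) ^ k) :=
          mul_le_mul_of_nonneg_left (geo2 k) (by positivity)
      _ = 6 * ((2 : ℝ) ^ (k + 1) * (g k - g (k + 1)) ^ 2) := by
          have hp2 : (4 / 3 : ℝ) ^ k * (3 / 2 : ℝ) ^ k = (2 : ℝ) ^ k := by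
            rw [← mul_pow]; norm_num
          linear_combination (12 * (g k - g (k + 1)) ^ 2) * hp2
  linarith

/-- Spectral gap lower bound `λ₁(Q_h) ≥ 1/6` for the weighted path `Q_h`
(vertices `{0,…,h}`, edge weights `2^(j+1)`, vertex weights `2^j`), stated as a
functional inequality: every `g` with `∑_j 2^j g(j) = 0` satisfies
`∑_{j<h} 2^(j+1) (g(j)-g(j+1))² ≥ (1/6) ∑_j 2^j g(j)²`. -/
theorem Qh_gap (h : ℕ) (g : ℕ → ℝ)
    (hmean : ∑ j ∈ Finset.range (h + 1), (2 : ℝ) ^ j * g j = 0) :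
    ∑ j ∈ Finset.range h, (2 : ℝ) ^ (j + 1) * (g j - g (j + 1)) ^ 2
      ≥ (1 / 6) * ∑ j ∈ Finset.range (h + 1), (2 : ℝ) ^ j * g j ^ 2 := by
  have var_bound : ∑ j ∈ Finset.range (h + 1), (2 : ℝ) ^ j * g j ^ 2 ≤
      ∑ j ∈ Finset.range (h + 1), (2 : ℝ) ^ j * (g j - g h) ^ 2 := by
    have expand : ∀ j ∈ Finset.range (h + 1), (2 : ℝ) ^ j * (g j - g h) ^ 2 =
        2 ^ j * g j ^ 2 - 2 * g h * (2 ^ j * g j) + g h ^ 2 * 2 ^ j := fun j _ => by ring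
    rw [Finset.sum_congr rfl expand, Finset.sum_add_distrib, Finset.sum_sub_distrib,
      ← Finset.mul_sum, hmean, ← Finset.mul_sum]
    have h1 : (0 : ℝ) ≤ g h ^ 2 * ∑ j ∈ Finset.range (h + 1), (2 : ℝ) ^ j := by
      have : (0 : ℝ) ≤ ∑ j ∈ Finset.range (h + 1), (2 : ℝ) ^ j :=
        Finset.sum_nonneg fun j _ => by positivity
      positivity
    linarith
  have := key_lemma h g
  linarith
end

section
/- The graph hat T_{h,k}, obtained from the complete rooted binary tree of height h by subdividing every edge into k edges and then adding a path through the vertices of each depth level in in-order traversal order, is planar. -/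
/-!
`hatT h k` is the planar graph of Lee–Qin: the complete rooted binary tree of
height `h`, with every edge subdivided into `k` edges, and with a path added
through the vertices of each depth level in left-to-right (in-order traversal)
order.

Encoding: a vertex is a pair `(d, i)` where `d ≤ hk` is the depth and `i` is
the left-to-right position at depth `d`.  There are `2^⌈d/k⌉` vertices at depth
`d`: for `d = jk` these are the tree vertices at level `j` (in in-order, i.e.
left-to-right, order), and for `jk < d < (j+1)k` these are the `2^(j+1)`
subdivision vertices lying on the `2^(j+1)` tree edges from level `j` to level
`j+1`, ordered left to right.
-/

/-- Vertices of `hatT h k`: pairs (depth `d ≤ hk`, position `i < 2^⌈d/k⌉`). -/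
def VhatT (h k : ℕ) : Type := Σ d : Fin (h * k + 1), Fin (2 ^ ((d.1 + k - 1) / k))

/-- One directed step of adjacency in `hatT h k`: either a horizontal edge of a
level path (same depth, consecutive positions), or a vertical (subdivided tree)
edge from depth `d` to depth `d+1`: at a tree vertex (`d ≡ 0 mod k`) the two
outgoing tree edges go to positions `2i` and `2i+1`, while at a subdivision
vertex (`d ≢ 0 mod k`) the edge continues to the same position below. -/
def hatStep (k : ℕ) {h : ℕ} (u v : VhatT h k) : Prop :=
  ((u.1 : ℕ) = (v.1 : ℕ) ∧ (u.2 : ℕ) + 1 = (v.2 : ℕ)) ∨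
  ((u.1 : ℕ) + 1 = (v.1 : ℕ) ∧
    (((u.1 : ℕ) % k = 0 ∧ ((v.2 : ℕ) = 2 * (u.2 : ℕ) ∨ (v.2 : ℕ) = 2 * (u.2 : ℕ) + 1)) ∨
     ((u.1 : ℕ) % k ≠ 0 ∧ (v.2 : ℕ) = (u.2 : ℕ))))

/-- The graph `hatT h k`. -/
def hatT (h k : ℕ) : SimpleGraph (VhatT h k) where
  Adj u v := hatStep k u v ∨ hatStep k v u
  symm := ⟨fun u v hv => hv.symm⟩
  loopless := ⟨fun u hu => by
    rcases hu with (⟨_, h2⟩ | ⟨h1, _⟩) | (⟨_, h2⟩ | ⟨h1, _⟩) <;> omega⟩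

/-- A graph is planar if it admits a drawing in the plane: an injective
placement of the vertices together with an arc for each edge joining the images
of its endpoints, such that each arc is simple, two arcs of distinct edges meet
only in common endpoints, and no arc passes through the image of a third
vertex. -/
def SimpleGraph.IsPlanar {V : Type*} (G : SimpleGraph V) : Prop :=
  ∃ (pos : V → ℝ × ℝ) (arc : ∀ u v : V, G.Adj u v → _root_.Path (pos u) (pos v)),
    Function.Injective pos ∧
    (∀ u v (h : G.Adj u v), Function.Injective (arc u v h)) ∧
    (∀ u v (h : G.Adj u v) (w z : V) (h' : G.Adj w z), s(u, v) ≠ s(w, z) →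
      Set.range (arc u v h) ∩ Set.range (arc w z h') ⊆
        ({pos u, pos v} ∩ {pos w, pos z} : Set (ℝ × ℝ))) ∧
    (∀ u v (h : G.Adj u v) (x : V), pos x ∈ Set.range (arc u v h) → x = u ∨ x = v)

namespace HatPlanar

noncomputable def vfun (i : ℕ) (t : ℝ) : ℝ :=
  ((4 * (i / 2) + 2 : ℕ) : ℝ) + t * (2 * ((i % 2 : ℕ) : ℝ) - 1)

lemma vfun_affine (b : ℕ) (s s' t : ℝ) :
    vfun b s + t * (vfun b s' - vfun b s) = vfun b (s + t * (s' - s)) := by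
  unfold vfun; ring

lemma vfun_le {b b' : ℕ} (hbb : b < b') {t : ℝ} (ht0 : 0 ≤ t) (ht1 : t ≤ 1) :
    vfun b t ≤ vfun b' t ∧ (vfun b t = vfun b' t → t = 0 ∧ b / 2 = b' / 2) := by
  have h1 := Nat.div_add_mod b 2
  have h2 := Nat.div_add_mod b' 2
  have hm : b % 2 < 2 := Nat.mod_lt _ (by norm_num)
  have hm' : b' % 2 < 2 := Nat.mod_lt _ (by norm_num)
  unfold vfun
  rcases Nat.lt_or_ge (b / 2) (b' / 2) with hq | hq
  · have hqr : ((b / 2 : ℕ) : ℝ) + 1 ≤ ((b' / 2 : ℕ) : ℝ) := by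
      exact_mod_cast Nat.succ_le_of_lt hq
    have e0 : ((b % 2 : ℕ) : ℝ) ≤ 1 := by exact_mod_cast Nat.lt_succ_iff.mp hm
    have e1 : (0:ℝ) ≤ ((b' % 2 : ℕ) : ℝ) := by positivity
    have key : ((4 * (b / 2) + 2 : ℕ) : ℝ) + t * (2 * ((b % 2 : ℕ) : ℝ) - 1)
        < ((4 * (b' / 2) + 2 : ℕ) : ℝ) + t * (2 * ((b' % 2 : ℕ) : ℝ) - 1) := by
      push_cast
      nlinarith
    exact ⟨key.le, fun he => absurd he key.ne⟩
  · have hq2 : b / 2 = b' / 2 := by omega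
    have hb0 : b % 2 = 0 := by omega
    have hb1 : b' % 2 = 1 := by omega
    rw [hq2, hb0, hb1]
    push_cast
    refine ⟨by linarith, fun he => ⟨by linarith, ?_⟩⟩
    omega

lemma vfun_lt {b b' : ℕ} (hbb : b < b') {t : ℝ} (ht0 : 0 < t) (ht1 : t ≤ 1) :
    vfun b t < vfun b' t := by
  rcases vfun_le hbb ht0.le ht1 with ⟨hle, heq⟩
  rcases hle.lt_or_eq with h | h
  · exact h
  · exact absurd (heq h).1 (by linarith)

/-- ceiling of d/k -/
def jix (k d : ℕ) : ℕ := (d + k - 1) / k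

noncomputable def xc (k d i : ℕ) : ℝ :=
  if d = 0 then 1
  else vfun i (((d - (jix k d - 1) * k : ℕ) : ℝ) / (k : ℝ)) / 2 ^ jix k d

lemma jix_spec {k : ℕ} (hk : 1 ≤ k) {d : ℕ} (hd : 1 ≤ d) :
    1 ≤ jix k d ∧ (jix k d - 1) * k < d ∧ d ≤ jix k d * k := by
  have hmod := Nat.div_add_mod (d + k - 1) k
  have hm2 : (d + k - 1) % k < k := Nat.mod_lt _ (by omega)
  have h3 : 1 ≤ jix k d := by
    rw [jix, Nat.le_div_iff_mul_le (by omega : 0 < k)]; omega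
  have hc : k * ((d + k - 1) / k) = jix k d * k := by rw [jix]; ring
  rw [Nat.sub_mul]
  omega

lemma jix_eq {k : ℕ} (hk : 1 ≤ k) {j r : ℕ} (hj : 1 ≤ j) (hr1 : 1 ≤ r) (hrk : r ≤ k) :
    jix k ((j - 1) * k + r) = j := by
  have hjk : (j - 1) * k + k = j * k := by
    rw [Nat.sub_mul]
    have : k ≤ j * k := Nat.le_mul_of_pos_left k (by omega)
    omega
  have h : (j - 1) * k + r + k - 1 = (r - 1) + j * k := by omega
  rw [jix, h, Nat.add_mul_div_right _ _ (by omega : 0 < k), Nat.div_eq_of_lt (by omega)]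
  omega

lemma xc_eq {k : ℕ} (hk : 1 ≤ k) {d j r : ℕ} (i : ℕ) (hj : 1 ≤ j)
    (hd : d = (j - 1) * k + r) (hr1 : 1 ≤ r) (hrk : r ≤ k) :
    xc k d i = vfun i ((r : ℝ) / (k : ℝ)) / 2 ^ j := by
  have hd1 : d ≠ 0 := by omega
  have hjd : jix k d = j := by rw [hd]; exact jix_eq hk hj hr1 hrk
  rw [xc, if_neg hd1, hjd, hd, Nat.add_sub_cancel_left]

lemma sub_one_mul_add' {j k : ℕ} (hj : 1 ≤ j) : (j - 1) * k + k = j * k := by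
  rw [Nat.sub_mul]
  have : k ≤ j * k := Nat.le_mul_of_pos_left k (by omega)
  omega

lemma vfun_one (m : ℕ) : vfun m 1 = 2 * (m : ℝ) + 1 := by
  have h := Nat.div_add_mod m 2
  have h2 : ((2 * (m / 2) + m % 2 : ℕ) : ℝ) = (m : ℝ) := by exact_mod_cast h
  unfold vfun
  push_cast at h2 ⊢
  linarith

lemma xc_strictMono {k : ℕ} (hk : 1 ≤ k) (d : ℕ) {i i' : ℕ} (hi' : i' < 2 ^ jix k d)
    (hii : i < i') : xc k d i < xc k d i' := by
  rcases Nat.eq_zero_or_pos d with rfl | hd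
  · have h0 : jix k 0 = 0 := by rw [jix]; exact Nat.div_eq_of_lt (by omega)
    rw [h0] at hi'
    omega
  · obtain ⟨h1, h2, h3⟩ := jix_spec hk hd
    set j := jix k d with hj
    set r := d - (j - 1) * k with hr
    have hsum : (j - 1) * k + k = j * k := sub_one_mul_add' h1
    have hdd : d = (j - 1) * k + r := by omega
    have hr1 : 1 ≤ r := by omega
    have hrk : r ≤ k := by omega
    rw [xc_eq hk i h1 hdd hr1 hrk, xc_eq hk i' h1 hdd hr1 hrk]
    have h2j : (0:ℝ) < 2 ^ j := by positivity
    apply (div_lt_div_iff_of_pos_right h2j).mpr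
    apply vfun_lt hii
    · apply div_pos (by exact_mod_cast hr1) (by exact_mod_cast hk)
    · rw [div_le_one (by exact_mod_cast hk)]
      exact_mod_cast hrk

/-- position of a vertex in the plane -/
noncomputable def pos (k : ℕ) {h : ℕ} (u : VhatT h k) : ℝ × ℝ :=
  (xc k u.1 u.2, -((u.1 : ℕ) : ℝ))

lemma vext {h k : ℕ} {u w : VhatT h k} (h1 : (u.1 : ℕ) = (w.1 : ℕ))
    (h2 : (u.2 : ℕ) = (w.2 : ℕ)) : u = w := by
  obtain ⟨a, b⟩ := u
  obtain ⟨c, e⟩ := w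
  simp only at h1 h2
  have hac : a = c := Fin.ext h1
  subst hac
  exact congrArg (Sigma.mk a) (Fin.ext h2)

lemma pos_injective {h k : ℕ} (hk : 1 ≤ k) : Function.Injective (pos k (h := h)) := by
  intro u w he
  obtain ⟨h1, h2⟩ := Prod.ext_iff.mp he
  simp only [pos] at h1 h2
  have hd : (u.1 : ℕ) = (w.1 : ℕ) := by exact_mod_cast neg_inj.mp h2
  obtain ⟨bw, hbw⟩ : ∃ m, (w.2 : ℕ) = m := ⟨_, rfl⟩
  have hbw2 : bw < 2 ^ jix k (u.1 : ℕ) := by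
    have hlt := w.2.isLt
    rw [hbw] at hlt
    rw [show ((w.1 : ℕ) + k - 1) / k = jix k (w.1 : ℕ) from rfl, ← hd] at hlt
    exact hlt
  have hbu : (u.2 : ℕ) < 2 ^ jix k (u.1 : ℕ) := u.2.isLt
  rw [hbw, ← hd] at h1
  apply vext hd
  rw [hbw]
  rcases Nat.lt_trichotomy (u.2 : ℕ) bw with hlt | heq | hgt
  · exact absurd h1 (xc_strictMono hk _ hbw2 hlt).ne
  · exact heq
  · exact absurd h1.symm (xc_strictMono hk _ hbu hgt).ne


/-- data of a vertical step -/
lemma vstep_data {h k : ℕ} (hk : 1 ≤ k) {u v : VhatT h k}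
    (hd : (u.1 : ℕ) + 1 = (v.1 : ℕ))
    (hc : (((u.1 : ℕ) % k = 0 ∧ ((v.2 : ℕ) = 2 * (u.2 : ℕ) ∨ (v.2 : ℕ) = 2 * (u.2 : ℕ) + 1)) ∨
     ((u.1 : ℕ) % k ≠ 0 ∧ (v.2 : ℕ) = (u.2 : ℕ)))) :
    ∃ j r : ℕ,
      j = jix k ((u.1 : ℕ) + 1) ∧
      r = (u.1 : ℕ) - (j - 1) * k ∧
      1 ≤ j ∧ r < k ∧ (u.1 : ℕ) = (j - 1) * k + r ∧ (u.1 : ℕ) % k = r ∧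
      (v.2 : ℕ) < 2 ^ j ∧
      ((u.2 : ℕ) = if r = 0 then (v.2 : ℕ) / 2 else (v.2 : ℕ)) ∧
      xc k (u.1 : ℕ) (u.2 : ℕ) = vfun (v.2 : ℕ) ((r : ℝ) / (k : ℝ)) / 2 ^ j ∧
      xc k ((u.1 : ℕ) + 1) (v.2 : ℕ) = vfun (v.2 : ℕ) (((r : ℝ) + 1) / (k : ℝ)) / 2 ^ j := by
  obtain ⟨⟨du, hdu⟩, au, hau⟩ := u
  obtain ⟨⟨dv, hdv⟩, bv, hbv2⟩ := v
  simp only [Fin.val_mk] at hd hc hau hbv2 ⊢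
  have hdv' : dv = du + 1 := hd.symm
  subst hdv'
  obtain ⟨hj1, hjl, hjr⟩ := jix_spec hk (show 1 ≤ du + 1 by omega)
  refine ⟨jix k (du + 1), du - (jix k (du + 1) - 1) * k, rfl, rfl, hj1, ?_⟩
  generalize hJ : jix k (du + 1) = j at *
  set r := du - (j - 1) * k with hr
  have hsum : (j - 1) * k + k = j * k := sub_one_mul_add' hj1
  have hdr : du = (j - 1) * k + r := by omega
  have hrk : r < k := by omega
  have hmod : du % k = r := by
    have hd2 : du = r + (j - 1) * k := by omega
    rw [hd2, Nat.add_mul_mod_self_right, Nat.mod_eq_of_lt hrk]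
  have hb : bv < 2 ^ j := by rw [← hJ]; exact hbv2
  have hbot : xc k (du + 1) bv = vfun bv (((r : ℝ) + 1) / (k : ℝ)) / 2 ^ j := by
    have := xc_eq (d := du + 1) (j := j) (r := r + 1) hk bv hj1 (by omega) (by omega)
      (by omega)
    rw [this]
    norm_num
  refine ⟨hrk, hdr, hmod, hb, ?_, ?_, hbot⟩
  · rcases hc with ⟨hm0, hbv⟩ | ⟨hm0, hbv⟩
    · rw [if_pos (by omega)]
      omega
    · rw [if_neg (by omega)]
      omega
  · rcases hc with ⟨hm0, hbv⟩ | ⟨hm0, hbv⟩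
    · -- tree vertex: r = 0
      have hr0 : r = 0 := by omega
      have hu2 : au = bv / 2 := by omega
      rcases Nat.eq_zero_or_pos du with hd0 | hd1
      · -- root
        subst hd0
        have hjone : j = 1 := by
          have h1 : jix k ((1 - 1) * k + 1) = 1 := jix_eq hk le_rfl le_rfl hk
          rw [← hJ]
          simpa using h1
        have hau0 : au = 0 := by
          have hz : (0 + k - 1) / k = 0 := Nat.div_eq_of_lt (by omega)
          rw [hz] at hau
          omega
        have hv2 : bv / 2 = 0 := by omega
        rw [hjone, hr0, hau0]
        rw [xc, if_pos rfl]
        unfold vfun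
        rw [hv2]
        norm_num
      · -- interior tree vertex: du = (j-1)*k ≥ 1
        have hj2 : 2 ≤ j := by
          rcases Nat.lt_or_ge j 2 with h2 | h2
          · interval_cases j <;> omega
          · exact h2
        have hsum2 : (j - 1 - 1) * k + k = (j - 1) * k := sub_one_mul_add' (by omega)
        have hxeq := xc_eq (d := du) (j := j - 1) (r := k) hk au (by omega) (by omega) hk le_rfl
        rw [hxeq]
        have hkk : ((k : ℝ)) / (k : ℝ) = 1 := div_self (by positivity)
        rw [hkk, vfun_one, hr0, hu2]
        have h2p : (2:ℝ) ^ j = 2 ^ (j - 1) * 2 := by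
          rw [← pow_succ]
          congr 1
          omega
        rw [h2p]
        unfold vfun
        have hk0 : (k : ℝ) ≠ 0 := by positivity
        have h2j : ((2:ℝ) ^ (j - 1)) ≠ 0 := by positivity
        push_cast
        field_simp
        ring
    · -- subdivision vertex: r ≠ 0
      have hr1 : 1 ≤ r := by omega
      rw [show au = bv by omega]
      exact xc_eq hk bv hj1 hdr hr1 (by omega)

/-! ### Segments and paths -/

lemma seg_mem_param {a b p : ℝ × ℝ} (hp : p ∈ segment ℝ a b) :
    ∃ t : ℝ, 0 ≤ t ∧ t ≤ 1 ∧ p.1 = (1 - t) * a.1 + t * b.1 ∧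
      p.2 = (1 - t) * a.2 + t * b.2 := by
  rw [segment_eq_image] at hp
  obtain ⟨t, ht, rfl⟩ := hp
  exact ⟨t, ht.1, ht.2, rfl, rfl⟩

lemma seg_mem_of_param {a b : ℝ × ℝ} {t : ℝ} (ht0 : 0 ≤ t) (ht1 : t ≤ 1) :
    ((1 - t) * a.1 + t * b.1, (1 - t) * a.2 + t * b.2) ∈ segment ℝ a b := by
  rw [segment_eq_image]
  exact ⟨t, ⟨ht0, ht1⟩, rfl⟩

noncomputable def seg (a b : ℝ × ℝ) : Path a b where
  toFun := fun t => (1 - (t : ℝ)) • a + (t : ℝ) • b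
  continuous_toFun := by fun_prop
  source' := by simp
  target' := by simp

lemma seg_range (a b : ℝ × ℝ) : Set.range (seg a b) = segment ℝ a b := by
  rw [segment_eq_image]
  ext p
  constructor
  · rintro ⟨t, rfl⟩
    exact ⟨(t : ℝ), t.2, rfl⟩
  · rintro ⟨t, ht, rfl⟩
    exact ⟨⟨t, ht⟩, rfl⟩

lemma seg_injective {a b : ℝ × ℝ} (hab : a ≠ b) : Function.Injective (seg a b) := by
  intro s t hst
  simp only [seg, Path.coe_mk_mk] at hst
  have h : ((s : ℝ) - (t : ℝ)) • (b - a) = 0 := by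
    have : (1 - (s : ℝ)) • a + (s : ℝ) • b - ((1 - (t : ℝ)) • a + (t : ℝ) • b) = 0 := by
      rw [hst]; abel
    rw [← this]
    module
  rcases smul_eq_zero.mp h with h0 | h0
  · exact Subtype.ext (by linarith [sub_eq_zero.mp h0])
  · exact absurd (sub_eq_zero.mp h0).symm hab

/-! ### Normal forms for step endpoints -/

lemma pos_fst {h k : ℕ} (u : VhatT h k) : (pos k u).1 = xc k (u.1 : ℕ) (u.2 : ℕ) := rfl

lemma pos_snd {h k : ℕ} (u : VhatT h k) : (pos k u).2 = -(((u.1 : ℕ) : ℝ)) := rfl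

lemma snd_bound {h k : ℕ} (u : VhatT h k) : (u.2 : ℕ) < 2 ^ jix k (u.1 : ℕ) := u.2.isLt

lemma hstep_posv {h k : ℕ} {u v : VhatT h k} (hd : (u.1 : ℕ) = (v.1 : ℕ))
    (hi : (u.2 : ℕ) + 1 = (v.2 : ℕ)) :
    pos k v = (xc k (u.1 : ℕ) ((u.2 : ℕ) + 1), -(((u.1 : ℕ)) : ℝ)) := by
  obtain ⟨⟨dv, hdv⟩, bv, hbv⟩ := v
  simp only [Fin.val_mk] at hd hi ⊢
  subst hd
  simp only [pos, Fin.val_mk]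
  rw [← hi]

lemma hstep_bound {h k : ℕ} {u v : VhatT h k} (hd : (u.1 : ℕ) = (v.1 : ℕ))
    (hi : (u.2 : ℕ) + 1 = (v.2 : ℕ)) : (u.2 : ℕ) + 1 < 2 ^ jix k (u.1 : ℕ) := by
  obtain ⟨⟨dv, hdv⟩, bv, hbv⟩ := v
  simp only [Fin.val_mk] at hd hi
  subst hd
  rw [hi]
  exact hbv

lemma vstep_posv {h k : ℕ} {u v : VhatT h k} (hd : (u.1 : ℕ) + 1 = (v.1 : ℕ)) :
    pos k v = (xc k ((u.1 : ℕ) + 1) (v.2 : ℕ), -((((u.1 : ℕ)) : ℝ) + 1)) := by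
  obtain ⟨⟨dv, hdv⟩, bv, hbv⟩ := v
  simp only [Fin.val_mk] at hd ⊢
  subst hd
  simp only [pos, Fin.val_mk]
  push_cast
  rfl

lemma vseg_point {k j b r : ℕ} (hk : 1 ≤ k) (t : ℝ) :
    (1 - t) * (vfun b ((r : ℝ) / k) / 2 ^ j) + t * (vfun b (((r : ℝ) + 1) / k) / 2 ^ j)
      = vfun b (((r : ℝ) + t) / k) / 2 ^ j := by
  have hk0 : (k : ℝ) ≠ 0 := by positivity
  unfold vfun
  field_simp
  ring

lemma xc_mono {k : ℕ} (hk : 1 ≤ k) (d : ℕ) {i i' : ℕ} (hi' : i' < 2 ^ jix k d)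
    (hii : i ≤ i') : xc k d i ≤ xc k d i' := by
  rcases hii.lt_or_eq with hlt | rfl
  · exact (xc_strictMono hk d hi' hlt).le
  · exact le_refl _

lemma between_idx {k : ℕ} (hk : 1 ≤ k) {d i m : ℕ} (hi : i + 1 < 2 ^ jix k d)
    (hm : m < 2 ^ jix k d) (hle1 : xc k d i ≤ xc k d m) (hle2 : xc k d m ≤ xc k d (i + 1)) :
    m = i ∨ m = i + 1 := by
  rcases Nat.lt_or_ge m i with h1 | h1
  · exact absurd hle1 (not_le.mpr (xc_strictMono hk d (by omega) h1))
  · rcases Nat.lt_or_ge (i + 1) m with h2 | h2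
    · exact absurd hle2 (not_le.mpr (xc_strictMono hk d hm h2))
    · omega

lemma vfun_eq_node {b b' : ℕ} {s : ℝ} (hbb : b ≠ b') (hs0 : 0 ≤ s) (hs1 : s ≤ 1)
    (heq : vfun b s = vfun b' s) : s = 0 ∧ b / 2 = b' / 2 := by
  rcases Nat.lt_or_ge b b' with hlt | hge
  · exact (vfun_le hlt hs0 hs1).2 heq
  · have hlt : b' < b := by omega
    obtain ⟨hs, hq⟩ := (vfun_le hlt hs0 hs1).2 heq.symm
    exact ⟨hs, hq.symm⟩

/-! ### projection-level endpoint lemmas -/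

lemma hstep_fst {h k : ℕ} {u v : VhatT h k} (hd : (u.1 : ℕ) = (v.1 : ℕ))
    (hi : (u.2 : ℕ) + 1 = (v.2 : ℕ)) :
    (pos k v).1 = xc k (u.1 : ℕ) ((u.2 : ℕ) + 1) := by rw [hstep_posv hd hi]

lemma hstep_snd {h k : ℕ} {u v : VhatT h k} (hd : (u.1 : ℕ) = (v.1 : ℕ))
    (hi : (u.2 : ℕ) + 1 = (v.2 : ℕ)) :
    (pos k v).2 = -(((u.1 : ℕ)) : ℝ) := by rw [hstep_posv hd hi]

lemma vstep_fst {h k : ℕ} {u v : VhatT h k} (hd : (u.1 : ℕ) + 1 = (v.1 : ℕ)) :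
    (pos k v).1 = xc k ((u.1 : ℕ) + 1) (v.2 : ℕ) := by rw [vstep_posv hd]

lemma vstep_snd {h k : ℕ} {u v : VhatT h k} (hd : (u.1 : ℕ) + 1 = (v.1 : ℕ)) :
    (pos k v).2 = -((((u.1 : ℕ)) : ℝ) + 1) := by rw [vstep_posv hd]

/-! ### Intersection lemmas -/

lemma convex_between {A B xi t : ℝ} (ht0 : 0 ≤ t) (ht1 : t ≤ 1) (hAB : A ≤ B)
    (hx : xi = (1 - t) * A + t * B) : A ≤ xi ∧ xi ≤ B := by
  constructor <;> nlinarith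

lemma inter_hh_lt {h k : ℕ} (hk : 1 ≤ k) {u v w z : VhatT h k}
    (hd1 : (u.1 : ℕ) = (v.1 : ℕ)) (hi1 : (u.2 : ℕ) + 1 = (v.2 : ℕ))
    (hd2 : (w.1 : ℕ) = (z.1 : ℕ)) (hi2 : (w.2 : ℕ) + 1 = (z.2 : ℕ))
    (hdd : (u.1 : ℕ) = (w.1 : ℕ)) (hlt : (u.2 : ℕ) < (w.2 : ℕ)) {p : ℝ × ℝ}
    (hp1 : p ∈ segment ℝ (pos k u) (pos k v)) (hp2 : p ∈ segment ℝ (pos k w) (pos k z)) :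
    p ∈ ({pos k u, pos k v} : Set (ℝ × ℝ)) ∩ {pos k w, pos k z} := by
  obtain ⟨t, ht0, ht1, hx1, hy1⟩ := seg_mem_param hp1
  obtain ⟨s, hs0, hs1, hx2, hy2⟩ := seg_mem_param hp2
  rw [pos_fst u, hstep_fst hd1 hi1] at hx1
  rw [pos_fst w, hstep_fst hd2 hi2] at hx2
  have hb1 : (u.2 : ℕ) + 1 < 2 ^ jix k (u.1 : ℕ) := hstep_bound hd1 hi1
  have hb2 : (w.2 : ℕ) + 1 < 2 ^ jix k (w.1 : ℕ) := hstep_bound hd2 hi2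
  have hb2' : (w.2 : ℕ) < 2 ^ jix k (u.1 : ℕ) := by rw [hdd]; omega
  have hmono1 : xc k (u.1 : ℕ) (u.2 : ℕ) ≤ xc k (u.1 : ℕ) ((u.2 : ℕ) + 1) :=
    xc_mono hk _ hb1 (by omega)
  have hmono2 : xc k (w.1 : ℕ) (w.2 : ℕ) ≤ xc k (w.1 : ℕ) ((w.2 : ℕ) + 1) :=
    xc_mono hk _ hb2 (by omega)
  obtain ⟨hl1, hr1⟩ := convex_between ht0 ht1 hmono1 hx1
  obtain ⟨hl2, hr2⟩ := convex_between hs0 hs1 hmono2 hx2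
  have hxw : xc k (u.1 : ℕ) (w.2 : ℕ) = xc k (w.1 : ℕ) (w.2 : ℕ) := by rw [hdd]
  have hmid : xc k (u.1 : ℕ) ((u.2 : ℕ) + 1) ≤ xc k (u.1 : ℕ) (w.2 : ℕ) :=
    xc_mono hk _ hb2' (by omega)
  have he1 : p.1 = xc k (u.1 : ℕ) ((u.2 : ℕ) + 1) := le_antisymm hr1 (by linarith)
  have he2 : p.1 = xc k (w.1 : ℕ) (w.2 : ℕ) := by linarith
  have hpy : p.2 = -(((u.1 : ℕ)) : ℝ) := by
    rw [hy1, pos_snd u, hstep_snd hd1 hi1]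
    ring
  constructor
  · right
    rw [hstep_posv hd1 hi1]
    exact Prod.ext_iff.mpr ⟨he1, hpy⟩
  · left
    refine Prod.ext_iff.mpr ⟨?_, ?_⟩
    · rw [pos_fst w]
      exact he2
    · rw [pos_snd w, hpy, hdd]

lemma inter_hh {h k : ℕ} (hk : 1 ≤ k) {u v w z : VhatT h k}
    (hd1 : (u.1 : ℕ) = (v.1 : ℕ)) (hi1 : (u.2 : ℕ) + 1 = (v.2 : ℕ))
    (hd2 : (w.1 : ℕ) = (z.1 : ℕ)) (hi2 : (w.2 : ℕ) + 1 = (z.2 : ℕ))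
    (hne : s(u, v) ≠ s(w, z)) {p : ℝ × ℝ}
    (hp1 : p ∈ segment ℝ (pos k u) (pos k v)) (hp2 : p ∈ segment ℝ (pos k w) (pos k z)) :
    p ∈ ({pos k u, pos k v} : Set (ℝ × ℝ)) ∩ {pos k w, pos k z} := by
  obtain ⟨t, ht0, ht1, hx1, hy1⟩ := seg_mem_param hp1
  obtain ⟨s, hs0, hs1, hx2, hy2⟩ := seg_mem_param hp2
  have hpy1 : p.2 = -(((u.1 : ℕ)) : ℝ) := by
    rw [hy1, pos_snd u, hstep_snd hd1 hi1]
    ring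
  have hpy2 : p.2 = -(((w.1 : ℕ)) : ℝ) := by
    rw [hy2, pos_snd w, hstep_snd hd2 hi2]
    ring
  have hdd : (u.1 : ℕ) = (w.1 : ℕ) := by
    have hc : (((u.1 : ℕ)) : ℝ) = (((w.1 : ℕ)) : ℝ) := by
      rw [hpy1] at hpy2
      linarith
    exact_mod_cast hc
  rcases Nat.lt_trichotomy (u.2 : ℕ) (w.2 : ℕ) with hlt | heq | hgt
  · exact inter_hh_lt hk hd1 hi1 hd2 hi2 hdd hlt hp1 hp2
  · have hu : u = w := vext hdd heq
    have hv : v = z := vext (by omega) (by omega)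
    exact absurd (by rw [hu, hv]) hne
  · obtain ⟨m1, m2⟩ := inter_hh_lt hk hd2 hi2 hd1 hi1 hdd.symm hgt hp2 hp1
    exact ⟨m2, m1⟩

lemma inter_hv {h k : ℕ} (hk : 1 ≤ k) {u v w z : VhatT h k}
    (hd1 : (u.1 : ℕ) = (v.1 : ℕ)) (hi1 : (u.2 : ℕ) + 1 = (v.2 : ℕ))
    (hd2 : (w.1 : ℕ) + 1 = (z.1 : ℕ)) {p : ℝ × ℝ}
    (hp1 : p ∈ segment ℝ (pos k u) (pos k v)) (hp2 : p ∈ segment ℝ (pos k w) (pos k z)) :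
    p ∈ ({pos k u, pos k v} : Set (ℝ × ℝ)) ∩ {pos k w, pos k z} := by
  obtain ⟨t, ht0, ht1, hx1, hy1⟩ := seg_mem_param hp1
  obtain ⟨s, hs0, hs1, hx2, hy2⟩ := seg_mem_param hp2
  have hpy1 : p.2 = -(((u.1 : ℕ)) : ℝ) := by
    rw [hy1, pos_snd u, hstep_snd hd1 hi1]
    ring
  have hpy2 : p.2 = -((((w.1 : ℕ)) : ℝ) + s) := by
    rw [hy2, pos_snd w, vstep_snd hd2]
    ring
  have hds : (((u.1 : ℕ)) : ℝ) = ((w.1 : ℕ) : ℝ) + s := by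
    rw [hpy1] at hpy2
    linarith
  have hdle : (w.1 : ℕ) ≤ (u.1 : ℕ) ∧ (u.1 : ℕ) ≤ (w.1 : ℕ) + 1 := by
    constructor
    · exact_mod_cast (by linarith : ((w.1 : ℕ) : ℝ) ≤ ((u.1 : ℕ) : ℝ))
    · exact_mod_cast (by push_cast; linarith : ((u.1 : ℕ) : ℝ) ≤ (((w.1 : ℕ) + 1 : ℕ) : ℝ))
  have hb1 : (u.2 : ℕ) + 1 < 2 ^ jix k (u.1 : ℕ) := hstep_bound hd1 hi1
  have hmono1 : xc k (u.1 : ℕ) (u.2 : ℕ) ≤ xc k (u.1 : ℕ) ((u.2 : ℕ) + 1) :=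
    xc_mono hk _ hb1 (by omega)
  rw [pos_fst u, hstep_fst hd1 hi1] at hx1
  obtain ⟨hl1, hr1⟩ := convex_between ht0 ht1 hmono1 hx1
  rcases (by omega : (u.1 : ℕ) = (w.1 : ℕ) ∨ (u.1 : ℕ) = (w.1 : ℕ) + 1) with hcase | hcase
  · -- p is the top endpoint of the vertical edge
    have hs0' : s = 0 := by
      have hc : (((u.1 : ℕ)) : ℝ) = ((w.1 : ℕ) : ℝ) := by exact_mod_cast hcase
      linarith
    have hpw : p = pos k w := by
      refine Prod.ext_iff.mpr ⟨?_, ?_⟩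
      · rw [hx2, hs0']; ring
      · rw [hpy2, hs0', pos_snd w]; ring
    have hpx : p.1 = xc k (u.1 : ℕ) (w.2 : ℕ) := by
      rw [hpw, pos_fst w, hcase]
    have hbw : (w.2 : ℕ) < 2 ^ jix k (u.1 : ℕ) := by rw [hcase]; exact snd_bound w
    rcases between_idx hk hb1 hbw (by linarith) (by linarith) with hm | hm
    · refine ⟨Or.inl ?_, Or.inl hpw⟩
      refine Prod.ext_iff.mpr ⟨?_, ?_⟩
      · rw [pos_fst u, ← hm]
        exact hpx
      · rw [pos_snd u]
        exact hpy1
    · refine ⟨Or.inr ?_, Or.inl hpw⟩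
      refine Prod.ext_iff.mpr ⟨?_, ?_⟩
      · rw [hstep_fst hd1 hi1, ← hm]
        exact hpx
      · rw [hstep_snd hd1 hi1]
        exact hpy1
  · -- p is the bottom endpoint of the vertical edge
    have hs1' : s = 1 := by
      have hc : (((u.1 : ℕ)) : ℝ) = ((w.1 : ℕ) : ℝ) + 1 := by exact_mod_cast hcase
      linarith
    have hpw : p = pos k z := by
      refine Prod.ext_iff.mpr ⟨?_, ?_⟩
      · rw [hx2, hs1']; ring
      · rw [hpy2, hs1', vstep_snd hd2]
    have hpx : p.1 = xc k (u.1 : ℕ) (z.2 : ℕ) := by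
      rw [hpw, vstep_fst hd2, hcase]
    have hbw : (z.2 : ℕ) < 2 ^ jix k (u.1 : ℕ) := by
      rw [show (u.1 : ℕ) = (z.1 : ℕ) by omega]
      exact snd_bound z
    rcases between_idx hk hb1 hbw (by linarith) (by linarith) with hm | hm
    · refine ⟨Or.inl ?_, Or.inr hpw⟩
      refine Prod.ext_iff.mpr ⟨?_, ?_⟩
      · rw [pos_fst u, ← hm]
        exact hpx
      · rw [pos_snd u]
        exact hpy1
    · refine ⟨Or.inr ?_, Or.inr hpw⟩
      refine Prod.ext_iff.mpr ⟨?_, ?_⟩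
      · rw [hstep_fst hd1 hi1, ← hm]
        exact hpx
      · rw [hstep_snd hd1 hi1]
        exact hpy1

lemma inter_vv_lt {h k : ℕ} (hk : 1 ≤ k) {u v w z : VhatT h k}
    (hd1 : (u.1 : ℕ) + 1 = (v.1 : ℕ)) (hd2 : (w.1 : ℕ) + 1 = (z.1 : ℕ))
    (hlt : (u.1 : ℕ) < (w.1 : ℕ)) {p : ℝ × ℝ}
    (hp1 : p ∈ segment ℝ (pos k u) (pos k v)) (hp2 : p ∈ segment ℝ (pos k w) (pos k z)) :
    p ∈ ({pos k u, pos k v} : Set (ℝ × ℝ)) ∩ {pos k w, pos k z} := by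
  obtain ⟨t, ht0, ht1, hx1, hy1⟩ := seg_mem_param hp1
  obtain ⟨s, hs0, hs1, hx2, hy2⟩ := seg_mem_param hp2
  have hpy1 : p.2 = -((((u.1 : ℕ)) : ℝ) + t) := by
    rw [hy1, pos_snd u, vstep_snd hd1]
    ring
  have hpy2 : p.2 = -((((w.1 : ℕ)) : ℝ) + s) := by
    rw [hy2, pos_snd w, vstep_snd hd2]
    ring
  have hds : (((u.1 : ℕ)) : ℝ) + t = ((w.1 : ℕ) : ℝ) + s := by
    rw [hpy1] at hpy2
    linarith
  have hd12 : (w.1 : ℕ) = (u.1 : ℕ) + 1 := by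
    rcases Nat.lt_or_ge (w.1 : ℕ) ((u.1 : ℕ) + 2) with h2 | h2
    · omega
    · exfalso
      have hc : (((u.1 : ℕ) + 2 : ℕ) : ℝ) ≤ ((w.1 : ℕ) : ℝ) := by exact_mod_cast h2
      push_cast at hc
      linarith
  have hcast : ((w.1 : ℕ) : ℝ) = (((u.1 : ℕ)) : ℝ) + 1 := by exact_mod_cast hd12
  have ht1' : t = 1 := by linarith
  have hs0' : s = 0 := by linarith
  constructor
  · right
    refine Prod.ext_iff.mpr ⟨?_, ?_⟩
    · rw [hx1, ht1']; ring
    · rw [hpy1, ht1', vstep_snd hd1]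
  · left
    refine Prod.ext_iff.mpr ⟨?_, ?_⟩
    · rw [hx2, hs0']; ring
    · rw [hpy2, hs0', pos_snd w]; ring

lemma inter_vv_eq {h k : ℕ} (hk : 1 ≤ k) {u v w z : VhatT h k}
    (hd1 : (u.1 : ℕ) + 1 = (v.1 : ℕ))
    (hc1 : (((u.1 : ℕ) % k = 0 ∧ ((v.2 : ℕ) = 2 * (u.2 : ℕ) ∨ (v.2 : ℕ) = 2 * (u.2 : ℕ) + 1)) ∨
     ((u.1 : ℕ) % k ≠ 0 ∧ (v.2 : ℕ) = (u.2 : ℕ))))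
    (hd2 : (w.1 : ℕ) + 1 = (z.1 : ℕ))
    (hc2 : (((w.1 : ℕ) % k = 0 ∧ ((z.2 : ℕ) = 2 * (w.2 : ℕ) ∨ (z.2 : ℕ) = 2 * (w.2 : ℕ) + 1)) ∨
     ((w.1 : ℕ) % k ≠ 0 ∧ (z.2 : ℕ) = (w.2 : ℕ))))
    (hdd : (u.1 : ℕ) = (w.1 : ℕ)) (hne : s(u, v) ≠ s(w, z)) {p : ℝ × ℝ}
    (hp1 : p ∈ segment ℝ (pos k u) (pos k v)) (hp2 : p ∈ segment ℝ (pos k w) (pos k z)) :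
    p ∈ ({pos k u, pos k v} : Set (ℝ × ℝ)) ∩ {pos k w, pos k z} := by
  obtain ⟨j1, r1, hJ1, hR1, hj11, hrk1, hdr1, hmod1, hb1, hiu1, hxt1, hxb1⟩ :=
    vstep_data hk hd1 hc1
  obtain ⟨j2, r2, hJ2, hR2, hj12, hrk2, hdr2, hmod2, hb2, hiu2, hxt2, hxb2⟩ :=
    vstep_data hk hd2 hc2
  have hjj : j2 = j1 := by rw [hJ1, hJ2, hdd]
  have hrr : r2 = r1 := by rw [← hmod1, ← hmod2, hdd]
  subst hjj
  subst hrr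
  obtain ⟨t, ht0, ht1, hx1, hy1⟩ := seg_mem_param hp1
  obtain ⟨s, hs0, hs1, hx2, hy2⟩ := seg_mem_param hp2
  have hpy1 : p.2 = -((((u.1 : ℕ)) : ℝ) + t) := by
    rw [hy1, pos_snd u, vstep_snd hd1]
    ring
  have hpy2 : p.2 = -((((w.1 : ℕ)) : ℝ) + s) := by
    rw [hy2, pos_snd w, vstep_snd hd2]
    ring
  have hcast : ((w.1 : ℕ) : ℝ) = (((u.1 : ℕ)) : ℝ) := by exact_mod_cast hdd.symm
  have hts : s = t := by
    rw [hpy1] at hpy2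
    linarith
  subst hts
  have hk0 : (k : ℝ) ≠ 0 := by positivity
  have hpx1 : p.1 = vfun (v.2 : ℕ) (((r2 : ℝ) + s) / k) / 2 ^ j2 := by
    rw [hx1, pos_fst u, vstep_fst hd1, hxt1, hxb1, vseg_point hk s]
  have hpx2 : p.1 = vfun (z.2 : ℕ) (((r2 : ℝ) + s) / k) / 2 ^ j2 := by
    rw [hx2, pos_fst w, vstep_fst hd2, hxt2, hxb2, vseg_point hk s]
  rcases eq_or_ne (v.2 : ℕ) (z.2 : ℕ) with hbv | hbv
  · -- same edge: contradiction
    have hu : u = w := vext hdd (by rw [hiu1, hiu2, hbv])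
    have hv : v = z := vext (by omega) hbv
    exact absurd (by rw [hu, hv]) hne
  · have hveq : vfun (v.2 : ℕ) (((r2 : ℝ) + s) / k) = vfun (z.2 : ℕ) (((r2 : ℝ) + s) / k) := by
      have hq := hpx1.symm.trans hpx2
      have h2j : ((2 : ℝ) ^ j2) ≠ 0 := by positivity
      field_simp at hq
      exact hq
    have hsb0 : (0 : ℝ) ≤ ((r2 : ℝ) + s) / k := by positivity
    have hsb1 : ((r2 : ℝ) + s) / k ≤ 1 := by
      rw [div_le_one (by positivity)]
      have hc : (r2 : ℝ) + 1 ≤ (k : ℝ) := by exact_mod_cast hrk2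
      linarith
    obtain ⟨hz, hq2⟩ := vfun_eq_node hbv hsb0 hsb1 hveq
    have hrs : (r2 : ℝ) + s = 0 := by
      rcases div_eq_zero_iff.mp hz with h0 | h0
      · exact h0
      · exact absurd h0 hk0
    have hr20 : r2 = 0 := by
      have h1 : (r2 : ℝ) = 0 := by
        have hge : (0:ℝ) ≤ (r2 : ℝ) := by positivity
        linarith
      exact_mod_cast h1
    have hs00 : s = 0 := by
      have hge : (0:ℝ) ≤ (r2 : ℝ) := by positivity
      linarith
    have hau : (u.2 : ℕ) = (w.2 : ℕ) := by
      rw [hiu1, hiu2, if_pos hr20, if_pos hr20, hq2]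
    have huw : u = w := vext hdd hau
    have hpu : p = pos k u := by
      refine Prod.ext_iff.mpr ⟨?_, ?_⟩
      · rw [hx1, hs00]; ring
      · rw [hpy1, hs00, pos_snd u]; ring
    exact ⟨Or.inl hpu, Or.inl (by rw [← huw]; exact hpu)⟩

lemma step_inter {h k : ℕ} (hk : 1 ≤ k) {u v w z : VhatT h k} (h1 : hatStep k u v)
    (h2 : hatStep k w z) (hne : s(u, v) ≠ s(w, z)) {p : ℝ × ℝ}
    (hp1 : p ∈ segment ℝ (pos k u) (pos k v)) (hp2 : p ∈ segment ℝ (pos k w) (pos k z)) :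
    p ∈ ({pos k u, pos k v} : Set (ℝ × ℝ)) ∩ {pos k w, pos k z} := by
  rcases h1 with ⟨hd1, hi1⟩ | ⟨hd1, hc1⟩ <;> rcases h2 with ⟨hd2, hi2⟩ | ⟨hd2, hc2⟩
  · exact inter_hh hk hd1 hi1 hd2 hi2 hne hp1 hp2
  · exact inter_hv hk hd1 hi1 hd2 hp1 hp2
  · obtain ⟨m1, m2⟩ := inter_hv hk hd2 hi2 hd1 hp2 hp1
    exact ⟨m2, m1⟩
  · rcases Nat.lt_trichotomy (u.1 : ℕ) (w.1 : ℕ) with hlt | heq | hgt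
    · exact inter_vv_lt hk hd1 hd2 hlt hp1 hp2
    · exact inter_vv_eq hk hd1 hc1 hd2 hc2 heq hne hp1 hp2
    · obtain ⟨m1, m2⟩ := inter_vv_lt hk hd2 hd1 hgt hp2 hp1
      exact ⟨m2, m1⟩

lemma step_through {h k : ℕ} (hk : 1 ≤ k) {u v : VhatT h k} (hs : hatStep k u v)
    (x : VhatT h k) (hx : pos k x ∈ segment ℝ (pos k u) (pos k v)) : x = u ∨ x = v := by
  obtain ⟨t, ht0, ht1, hx1, hy1⟩ := seg_mem_param hx
  rcases hs with ⟨hd, hi⟩ | ⟨hd, hc⟩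
  · -- horizontal
    have hpy : (pos k x).2 = -(((u.1 : ℕ)) : ℝ) := by
      rw [hy1, pos_snd u, hstep_snd hd hi]
      ring
    rw [pos_snd x] at hpy
    have hdx : (x.1 : ℕ) = (u.1 : ℕ) := by exact_mod_cast neg_inj.mp hpy
    obtain ⟨m, hm⟩ : ∃ m, (x.2 : ℕ) = m := ⟨_, rfl⟩
    have hmb : m < 2 ^ jix k (u.1 : ℕ) := by
      have hb := snd_bound x
      rw [hm, hdx] at hb
      exact hb
    have hfst : (pos k x).1 = xc k (u.1 : ℕ) m := by rw [pos_fst x, hm, hdx]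
    have hb1 : (u.2 : ℕ) + 1 < 2 ^ jix k (u.1 : ℕ) := hstep_bound hd hi
    have hmono1 : xc k (u.1 : ℕ) (u.2 : ℕ) ≤ xc k (u.1 : ℕ) ((u.2 : ℕ) + 1) :=
      xc_mono hk _ hb1 (by omega)
    rw [pos_fst u, hstep_fst hd hi, hfst] at hx1
    obtain ⟨hl1, hr1⟩ := convex_between ht0 ht1 hmono1 hx1
    rcases between_idx hk hb1 hmb hl1 hr1 with hmm | hmm
    · exact Or.inl (vext hdx (by rw [hm]; omega))
    · exact Or.inr (vext (by omega) (by rw [hm]; omega))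
  · -- vertical
    have hpy : (pos k x).2 = -((((u.1 : ℕ)) : ℝ) + t) := by
      rw [hy1, pos_snd u, vstep_snd hd]
      ring
    rw [pos_snd x] at hpy
    have hxy : ((x.1 : ℕ) : ℝ) = ((u.1 : ℕ) : ℝ) + t := by
      have := neg_inj.mp hpy
      linarith
    have hdle : (u.1 : ℕ) ≤ (x.1 : ℕ) ∧ (x.1 : ℕ) ≤ (u.1 : ℕ) + 1 := by
      constructor
      · exact_mod_cast (by linarith : ((u.1 : ℕ) : ℝ) ≤ ((x.1 : ℕ) : ℝ))
      · exact_mod_cast (by push_cast; linarith : ((x.1 : ℕ) : ℝ) ≤ (((u.1 : ℕ) + 1 : ℕ) : ℝ))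
    rcases (by omega : (x.1 : ℕ) = (u.1 : ℕ) ∨ (x.1 : ℕ) = (u.1 : ℕ) + 1) with hcase | hcase
    · have ht00 : t = 0 := by
        have hc : ((x.1 : ℕ) : ℝ) = ((u.1 : ℕ) : ℝ) := by exact_mod_cast hcase
        linarith
      left
      apply pos_injective hk
      refine Prod.ext_iff.mpr ⟨?_, ?_⟩
      · rw [hx1, ht00]; ring
      · have hc : ((x.1 : ℕ) : ℝ) = ((u.1 : ℕ) : ℝ) := by exact_mod_cast hcase
        rw [pos_snd x, pos_snd u, hc]
    · have ht11 : t = 1 := by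
        have hc : ((x.1 : ℕ) : ℝ) = ((u.1 : ℕ) : ℝ) + 1 := by
          rw [hcase]; push_cast; ring
        linarith
      right
      apply pos_injective hk
      refine Prod.ext_iff.mpr ⟨?_, ?_⟩
      · rw [hx1, ht11]; ring
      · rw [pos_snd x, vstep_snd hd, hxy, ht11]

end HatPlanar

open HatPlanar in
/-- The graph `hatT h k` is planar. -/
theorem hatT_isPlanar (h k : ℕ) (hk : 1 ≤ k) : (hatT h k).IsPlanar := by
  refine ⟨pos k, fun u v _ => seg (pos k u) (pos k v),
    pos_injective hk, ?_, ?_, ?_⟩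
  · intro u v hadj
    exact seg_injective fun he => hadj.ne (pos_injective hk he)
  · intro u v hadj w z hadj' hne q hq
    rw [Set.mem_inter_iff, seg_range, seg_range] at hq
    obtain ⟨hq1, hq2⟩ := hq
    rcases hadj with h1 | h1 <;> rcases hadj' with h2 | h2
    · exact step_inter hk h1 h2 hne hq1 hq2
    · rw [segment_symm] at hq2
      have hne' : s(u, v) ≠ s(z, w) := fun hEq => hne (hEq.trans Sym2.eq_swap)
      obtain ⟨m1, m2⟩ := step_inter hk h1 h2 hne' hq1 hq2
      rw [Set.pair_comm (pos k z) (pos k w)] at m2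
      exact ⟨m1, m2⟩
    · rw [segment_symm] at hq1
      have hne' : s(v, u) ≠ s(w, z) := fun hEq => hne (Sym2.eq_swap.trans hEq)
      obtain ⟨m1, m2⟩ := step_inter hk h1 h2 hne' hq1 hq2
      rw [Set.pair_comm (pos k v) (pos k u)] at m1
      exact ⟨m1, m2⟩
    · rw [segment_symm] at hq1 hq2
      have hne' : s(v, u) ≠ s(z, w) := fun hEq =>
        hne ((Sym2.eq_swap.trans hEq).trans Sym2.eq_swap)
      obtain ⟨m1, m2⟩ := step_inter hk h1 h2 hne' hq1 hq2
      rw [Set.pair_comm (pos k v) (pos k u)] at m1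
      rw [Set.pair_comm (pos k z) (pos k w)] at m2
      exact ⟨m1, m2⟩
  · intro u v hadj x hx
    rw [seg_range] at hx
    rcases hadj with h1 | h1
    · exact step_through hk h1 x hx
    · rw [segment_symm] at hx
      exact (step_through hk h1 x hx).symm
end
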